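/- Fix integers d ≥ 2, ℓ ≥ 2 and n ≥ 1, set N = (d−1)ℓ + 2 and t = gcd(d+1, 2(ℓ−1)). There exists a (d+1)-angulation 𝒯 of P_N with ρ^{n(d−1)}(𝒯) = 𝒯 if and only if N divides 2n or N divides t·n. -/

import Mathlib

set_option maxHeartbeats 1000000
set_option linter.unusedSectionVars false
set_option linter.unusedVariables false


/-- `z` lies strictly inside the open clockwise cyclic arc from `a` to `b` in `ℤ/Nℤ`. -/
def InArc (N : ℕ) (a b z : ZMod N) : Prop :=
  0 < (z - a).val ∧ (z - a).val < (b - a).val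

/-- `{x, y}` is a `(d−1)`-diagonal of the `N`-gon: the representative
`m ∈ {1, …, N−1}` of `y − x` satisfies `2 ≤ m ≤ N−2` and `m ≡ 1 (mod d−1)`. -/
def IsDiag (d N : ℕ) (p : Sym2 (ZMod N)) : Prop :=
  ∃ x y : ZMod N, p = s(x, y) ∧
    2 ≤ (y - x).val ∧ (y - x).val ≤ N - 2 ∧ (d - 1) ∣ ((y - x).val - 1)

/-- Two diagonals cross: the endpoints of one separate the endpoints of the other,
i.e. one endpoint lies strictly inside one open arc determined by the other diagonal
and the other endpoint lies strictly inside the other open arc. -/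
def Crosses (N : ℕ) (p q : Sym2 (ZMod N)) : Prop :=
  ∃ a b c e : ZMod N, p = s(a, b) ∧ q = s(c, e) ∧ InArc N a b c ∧ InArc N b a e

/-- A `(d+1)`-angulation of the `N`-gon: a maximal set of pairwise non-crossing
`(d−1)`-diagonals. -/
def IsAngulation (d N : ℕ) (T : Set (Sym2 (ZMod N))) : Prop :=
  (∀ p ∈ T, IsDiag d N p) ∧ (∀ p ∈ T, ∀ q ∈ T, ¬ Crosses N p q) ∧
    ∀ S : Set (Sym2 (ZMod N)), (∀ p ∈ S, IsDiag d N p) →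
      (∀ p ∈ S, ∀ q ∈ S, ¬ Crosses N p q) → T ⊆ S → S = T

/-- The `k`-th power of the rotation `ρ` (one step anticlockwise, `x ↦ x − 1`),
acting on unordered pairs. -/
def rot (N k : ℕ) (p : Sym2 (ZMod N)) : Sym2 (ZMod N) :=
  Sym2.map (fun x => x - (k : ZMod N)) p

/-- `G` is a `(d+1)`-angle of the partial `(d+1)`-angulation `T`: `G` is a set of
`d+1` corners such that each pair of cyclically consecutive elements of `G` is either
at cyclic distance `1` (an outer edge) or forms a `(d−1)`-diagonal belonging to `T`. -/
def IsAngle (d N : ℕ) (T : Set (Sym2 (ZMod N))) (G : Finset (ZMod N)) : Prop :=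
  G.card = d + 1 ∧
    ∀ x y : ZMod N, x ∈ G → y ∈ G → x ≠ y → (∀ z ∈ G, ¬ InArc N x y z) →
      ((y - x).val = 1 ∨ s(x, y) ∈ T)

section Basics
variable {N : ℕ} [NeZero N]

lemma val_sub' (x y : ZMod N) : (y - x).val = (y.val + (N - x.val)) % N := by
  rw [sub_eq_add_neg, ZMod.val_add, ZMod.neg_val]
  split_ifs with h
  · subst h
    rw [ZMod.val_zero, Nat.sub_zero, Nat.add_zero, Nat.add_mod_right]
  · rfl

lemma val_lt' (x : ZMod N) : x.val < N := ZMod.val_lt x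

lemma val_sub_of_le {x y : ZMod N} (h : x.val ≤ y.val) : (y - x).val = y.val - x.val := by
  rw [val_sub']
  have hx := val_lt' x
  have hy := val_lt' y
  have : y.val + (N - x.val) = (y.val - x.val) + N := by omega
  rw [this, Nat.add_mod_right, Nat.mod_eq_of_lt (by omega)]

lemma val_sub_of_gt {x y : ZMod N} (h : y.val < x.val) : (y - x).val = y.val + N - x.val := by
  rw [val_sub']
  have hx := val_lt' x
  rw [Nat.mod_eq_of_lt (by omega)]
  omega

lemma val_eq_val_iff {x y : ZMod N} : x.val = y.val ↔ x = y :=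
  ⟨fun h => ZMod.val_injective N h, fun h => by rw [h]⟩

/-- Key: `InArc b a e` iff `e` is past `b` (measured from `a`). -/
lemma inArc_rev_iff {a b e : ZMod N} (hb : 0 < (b - a).val) :
    InArc N b a e ↔ (b - a).val < (e - a).val := by
  have hba : b - a ≠ 0 := by
    intro h; rw [h, ZMod.val_zero] at hb; omega
  have hab : (a - b).val = N - (b - a).val := by
    have : a - b = -(b - a) := by ring
    rw [this, ZMod.neg_val, if_neg hba]
  have heb : (e - b) = (e - a) - (b - a) := by ring
  have hBN := val_lt' (b - a)
  have hEN := val_lt' (e - a)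
  constructor
  · rintro ⟨h1, h2⟩
    rw [hab, heb] at *
    rcases le_or_gt (b - a).val (e - a).val with h | h
    · rw [val_sub_of_le h] at h1; omega
    · rw [val_sub_of_gt h] at h2; omega
  · intro h
    refine ⟨?_, ?_⟩ <;> rw [heb, val_sub_of_le (le_of_lt h)] <;> [omega; (rw [hab]; omega)]

/-- Master crossing lemma: crossing in terms of positions measured from `a`. -/
theorem crosses_iff (a b c e : ZMod N) :
    Crosses N s(a, b) s(c, e) ↔
      (0 < (c - a).val ∧ (c - a).val < (b - a).val ∧ (b - a).val < (e - a).val) ∨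
      (0 < (e - a).val ∧ (e - a).val < (b - a).val ∧ (b - a).val < (c - a).val) := by
  constructor
  · rintro ⟨a', b', c', e', hp, hq, h1, h2⟩
    rw [Sym2.eq_iff] at hp hq
    rcases hp with ⟨rfl, rfl⟩ | ⟨rfl, rfl⟩ <;> rcases hq with ⟨rfl, rfl⟩ | ⟨rfl, rfl⟩
    · -- (a,b,c,e) : InArc a b c, InArc b a e
      obtain ⟨h1a, h1b⟩ := h1
      have := (inArc_rev_iff (by omega)).mp h2
      exact Or.inl ⟨h1a, h1b, this⟩
    · obtain ⟨h1a, h1b⟩ := h1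
      have := (inArc_rev_iff (by omega)).mp h2
      exact Or.inr ⟨h1a, h1b, this⟩
    · -- p = s(b', a') form : a is b', b is a'.  h1 : InArc a' b' c = InArc b a c? careful
      -- here hp gave a = b' and b = a'; h1 : InArc a' b' c' with a' = b, b' = a
      obtain ⟨h2a, h2b⟩ := h2
      have := (inArc_rev_iff (N := N) (a := a) (b := b) (by omega)).mp h1
      exact Or.inr ⟨h2a, h2b, this⟩
    · obtain ⟨h2a, h2b⟩ := h2
      have := (inArc_rev_iff (N := N) (a := a) (b := b) (by omega)).mp h1
      exact Or.inl ⟨h2a, h2b, this⟩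
  · rintro (⟨h1, h2, h3⟩ | ⟨h1, h2, h3⟩)
    · exact ⟨a, b, c, e, rfl, rfl, ⟨h1, h2⟩, (inArc_rev_iff (by omega)).mpr h3⟩
    · exact ⟨a, b, e, c, rfl, by rw [Sym2.eq_swap], ⟨h1, h2⟩, (inArc_rev_iff (by omega)).mpr h3⟩

lemma not_crosses_self (p : Sym2 (ZMod N)) : ¬ Crosses N p p := by
  induction p using Sym2.ind with
  | _ x y =>
    rw [crosses_iff]
    rintro (⟨h1, h2, h3⟩ | ⟨h1, h2, h3⟩)
    · rw [sub_self, ZMod.val_zero] at h1; omega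
    · omega

end Basics
section Diag
variable {d N : ℕ} [NeZero N]

/-- flip condition: the diagonal condition is symmetric, given `(d-1) ∣ (N-2)`. -/
lemma diag_cond_flip (hN2 : (d - 1) ∣ (N - 2)) {m : ℕ} (hmN : m < N)
    (h : 2 ≤ m ∧ m ≤ N - 2 ∧ (d - 1) ∣ (m - 1)) :
    2 ≤ N - m ∧ N - m ≤ N - 2 ∧ (d - 1) ∣ (N - m - 1) := by
  obtain ⟨h1, h2, h3⟩ := h
  refine ⟨by omega, by omega, ?_⟩
  have : N - m - 1 = (N - 2) - (m - 1) := by omega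
  rw [this]
  exact Nat.dvd_sub hN2 h3

lemma isDiag_iff_s (hN2 : (d - 1) ∣ (N - 2)) (x y : ZMod N) :
    IsDiag d N s(x, y) ↔
      2 ≤ (y - x).val ∧ (y - x).val ≤ N - 2 ∧ (d - 1) ∣ ((y - x).val - 1) := by
  constructor
  · rintro ⟨x', y', hp, h⟩
    rw [Sym2.eq_iff] at hp
    rcases hp with ⟨rfl, rfl⟩ | ⟨rfl, rfl⟩
    · exact h
    · -- x = x', y = y' flipped : condition known for (x - y).val
      have hne : (x - y).val ≠ 0 := by omega
      have hxy : x - y ≠ 0 := by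
        intro hc; rw [hc, ZMod.val_zero] at hne; omega
      have : y - x = -(x - y) := by ring
      rw [this, ZMod.neg_val, if_neg hxy]
      exact diag_cond_flip hN2 (val_lt' _) h
  · intro h
    exact ⟨x, y, rfl, h⟩

/-- canonical increasing-val representative of a diagonal -/
lemma isDiag_rep (hN2 : (d - 1) ∣ (N - 2)) {p : Sym2 (ZMod N)} (hp : IsDiag d N p) :
    ∃ x y : ZMod N, p = s(x, y) ∧ x.val < y.val ∧
      2 ≤ y.val - x.val ∧ y.val - x.val ≤ N - 2 ∧ (d - 1) ∣ (y.val - x.val - 1) := by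
  obtain ⟨x, y, rfl, h⟩ := hp
  rcases lt_trichotomy x.val y.val with hlt | heq | hgt
  · refine ⟨x, y, rfl, hlt, ?_⟩
    rwa [val_sub_of_le (le_of_lt hlt)] at h
  · exfalso
    have : x = y := val_eq_val_iff.mp heq
    subst this
    rw [sub_self, ZMod.val_zero] at h
    omega
  · refine ⟨y, x, Sym2.eq_swap, hgt, ?_⟩
    have hxy : IsDiag d N s(y, x) := by
      rw [Sym2.eq_swap]; exact (isDiag_iff_s hN2 x y).mpr h
    have h' := (isDiag_iff_s hN2 y x).mp hxy
    rwa [val_sub_of_le (le_of_lt hgt)] at h'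

end Diag

section Rot
variable {d N : ℕ} [NeZero N]

lemma rot_s (k : ℕ) (x y : ZMod N) : rot N k s(x, y) = s(x - k, y - k) := rfl

lemma rot_cast_eq {k k' : ℕ} (h : (k : ZMod N) = (k' : ZMod N)) : rot N k = rot N k' := by
  funext p
  unfold rot
  rw [h]

lemma rot_rot (k₁ k₂ : ℕ) (p : Sym2 (ZMod N)) :
    rot N k₁ (rot N k₂ p) = rot N (k₁ + k₂) p := by
  unfold rot
  rw [Sym2.map_map]
  congr 1
  funext x
  simp only [Function.comp_apply]
  push_cast
  ring

lemma rot_dvd_id {k : ℕ} (h : N ∣ k) : rot N k = id := by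
  funext p
  unfold rot
  rw [(ZMod.natCast_eq_zero_iff k N).mpr h]
  simp [Sym2.map_id]

lemma sub_rot (k : ℕ) (x y : ZMod N) : (y - (k : ZMod N)) - (x - (k : ZMod N)) = y - x := by ring

lemma isDiag_rot_iff (k : ℕ) (p : Sym2 (ZMod N)) : IsDiag d N (rot N k p) ↔ IsDiag d N p := by
  induction p using Sym2.ind with
  | _ x y =>
    rw [rot_s]
    constructor
    · rintro ⟨x', y', hp, h⟩
      rw [Sym2.eq_iff] at hp
      rcases hp with ⟨hx, hy⟩ | ⟨hx, hy⟩
      · exact ⟨x, y, rfl, by rw [← sub_rot k x y, hx, hy]; exact h⟩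
      · exact ⟨y, x, Sym2.eq_swap, by rw [← sub_rot k y x, hy, hx]; exact h⟩
    · rintro ⟨x', y', hp, h⟩
      rw [Sym2.eq_iff] at hp
      rcases hp with ⟨hx, hy⟩ | ⟨hx, hy⟩
      · subst hx; subst hy; exact ⟨x - k, y - k, rfl, by rwa [sub_rot]⟩
      · subst hx; subst hy; exact ⟨y - k, x - k, Sym2.eq_swap, by rwa [sub_rot]⟩

lemma crosses_rot_iff (k : ℕ) (p q : Sym2 (ZMod N)) :
    Crosses N (rot N k p) (rot N k q) ↔ Crosses N p q := by
  induction p using Sym2.ind with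
  | _ x y =>
    induction q using Sym2.ind with
    | _ z w =>
      rw [rot_s, rot_s, crosses_iff, crosses_iff, sub_rot, sub_rot, sub_rot]

lemma rot_iterate (k : ℕ) (j : ℕ) (p : Sym2 (ZMod N)) :
    (rot N k)^[j] p = rot N (j * k) p := by
  induction j generalizing p with
  | zero =>
    rw [Function.iterate_zero_apply, Nat.zero_mul, rot_dvd_id (Nat.dvd_zero N), id_eq]
  | succ j ih =>
    rw [Function.iterate_succ_apply, ih, rot_rot]
    congr 1
    ring

lemma rot_injective (k : ℕ) : Function.Injective (rot N k) := by
  intro p q h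
  have : rot N 0 p = rot N 0 q := by
    have h2 : ∀ x : Sym2 (ZMod N), rot N 0 x = x := by
      intro x; rw [rot_dvd_id (Nat.dvd_zero N)]; rfl
    rw [h2, h2]
    have := congrArg (Sym2.map (fun x : ZMod N => x + (k : ZMod N))) h
    unfold rot at this
    rw [Sym2.map_map, Sym2.map_map] at this
    calc p = Sym2.map ((fun x : ZMod N => x + k) ∘ fun x => x - k) p := by
              rw [show ((fun x : ZMod N => x + k) ∘ fun x => x - k) = id by funext u; simp]
              rw [Sym2.map_id]; rfl
      _ = Sym2.map ((fun x : ZMod N => x + k) ∘ fun x => x - k) q := this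
      _ = q := by
              rw [show ((fun x : ZMod N => x + k) ∘ fun x => x - k) = id by funext u; simp]
              rw [Sym2.map_id]; rfl
  have h2 : ∀ x : Sym2 (ZMod N), rot N 0 x = x := by
    intro x; rw [rot_dvd_id (Nat.dvd_zero N)]; rfl
  rwa [h2, h2] at this

end Rot
section Abstract

def AC (d M : ℕ) (c : ℕ × ℕ) : Prop :=
  c.1 + 2 ≤ c.2 ∧ c.2 < M ∧ c.2 + 2 ≤ M + c.1 ∧ (d - 1) ∣ (c.2 - c.1 - 1)

def XC (c c' : ℕ × ℕ) : Prop :=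
  (c.1 < c'.1 ∧ c'.1 < c.2 ∧ c.2 < c'.2) ∨ (c'.1 < c.1 ∧ c.1 < c'.2 ∧ c'.2 < c.2)

lemma len_cases {d M : ℕ} {c : ℕ × ℕ} (hd : 2 ≤ d) (h : AC d M c) :
    c.2 = c.1 + d ∨ c.1 + (2 * d - 1) ≤ c.2 := by
  obtain ⟨h1, h2, h3, k, hk⟩ := h
  match k with
  | 0 => omega
  | 1 =>
    rw [Nat.mul_one] at hk
    omega
  | (k + 2) =>
    have h5 : (d - 1) * 2 ≤ (d - 1) * (k + 2) := Nat.mul_le_mul_left _ (by omega)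
    rw [← hk] at h5
    omega

lemma AC_len_ge {d M : ℕ} {c : ℕ × ℕ} (hd : 2 ≤ d) (h : AC d M c) : c.1 + d ≤ c.2 := by
  rcases len_cases hd h with h' | h' <;> omega

theorem abstract_count {d : ℕ} (hd : 2 ≤ d) :
    ∀ M : ℕ, ((d - 1) ∣ (M - 2)) → d + 1 ≤ M → ∀ F : Finset (ℕ × ℕ),
      (∀ c ∈ F, AC d M c) → (∀ c ∈ F, ∀ c' ∈ F, ¬ XC c c') →
      (∀ c, AC d M c → (∀ c' ∈ F, ¬ XC c c' ∧ ¬ XC c' c) → c ∈ F) →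
      (F.card + 1) * (d - 1) = M - 2 := by
  intro M
  induction M using Nat.strong_induction_on with
  | _ M ih =>
  intro hdvd hge F hFac hFnc hFmax
  -- dichotomy on M
  have hdich : M = d + 1 ∨ 2 * d ≤ M := by
    obtain ⟨j, hj⟩ := hdvd
    match j with
    | 0 => omega
    | 1 => rw [Nat.mul_one] at hj; omega
    | (j + 2) =>
      have h5 : (d - 1) * 2 ≤ (d - 1) * (j + 2) := Nat.mul_le_mul_left _ (by omega)
      rw [← hj] at h5
      omega
  rcases hdich with hM | hM
  · -- base case: no chords possible
    have hempty : F = ∅ := by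
      apply Finset.eq_empty_of_forall_notMem
      intro c hc
      have h1 := AC_len_ge hd (hFac c hc)
      have h2 := (hFac c hc).2.2.1
      omega
    rw [hempty, Finset.card_empty, Nat.zero_add, Nat.one_mul]
    omega
  · -- main case
    have hne : F.Nonempty := by
      by_contra hemp
      rw [Finset.not_nonempty_iff_eq_empty] at hemp
      have hac₀ : AC d M ((0, d) : ℕ × ℕ) := by
        refine ⟨by simp; omega, by simp; omega, by simp; omega, ?_⟩
        show (d - 1) ∣ (d - 0 - 1)
        simp
      have := hFmax (0, d) hac₀ (by intro c' hc'; rw [hemp] at hc'; simp at hc')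
      rw [hemp] at this
      simp at this
    obtain ⟨p, hpF, hpmin⟩ := F.exists_min_image (fun c => c.2 - c.1) hne
    have hpac := hFac p hpF
    -- no other endpoint strictly inside (p.1, p.2)
    have hgood : ∀ q ∈ F, q ≠ p →
        (q.1 ≤ p.1 ∨ p.2 ≤ q.1) ∧ (q.2 ≤ p.1 ∨ p.2 ≤ q.2) := by
      intro q hqF hqp
      have hqac := hFac q hqF
      have hmin := hpmin q hqF
      have hnc1 := hFnc p hpF q hqF
      have hnc2 := hFnc q hqF p hpF
      have h1q := hqac.1
      have h1p := hpac.1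
      constructor
      · by_contra hcon
        push_neg at hcon
        obtain ⟨ha, hb⟩ := hcon
        have ha' : p.1 < q.1 := by omega
        have hb' : q.1 < p.2 := by omega
        rcases lt_trichotomy q.2 p.2 with h2 | h2 | h2
        · omega
        · omega
        · exact hnc1 (Or.inl ⟨ha', hb', h2⟩)
      · by_contra hcon
        push_neg at hcon
        obtain ⟨ha, hb⟩ := hcon
        have ha' : p.1 < q.2 := by omega
        have hb' : q.2 < p.2 := by omega
        rcases lt_trichotomy q.1 p.1 with h2 | h2 | h2
        · exact hnc2 (Or.inl ⟨h2, ha', hb'⟩)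
        · omega
        · omega
    -- p is an ear of length d
    have hp2 : p.2 = p.1 + d := by
      rcases len_cases hd hpac with h | h
      · exact h
      · exfalso
        have hac₀ : AC d M ((p.1, p.1 + d) : ℕ × ℕ) := by
          refine ⟨by simp; omega, ?_, ?_, ?_⟩
          · show p.1 + d < M
            have := hpac.2.1
            omega
          · show p.1 + d + 2 ≤ M + p.1
            omega
          · show (d - 1) ∣ (p.1 + d - p.1 - 1)
            have heq : p.1 + d - p.1 - 1 = d - 1 := by omega
            rw [heq]
        have hcomp : ∀ c' ∈ F, ¬ XC ((p.1, p.1 + d) : ℕ × ℕ) c' ∧ ¬ XC c' (p.1, p.1 + d) := by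
          intro c' hc'F
          by_cases hcp : c' = p
          · subst hcp
            constructor <;> rintro (⟨h1, h2, h3⟩ | ⟨h1, h2, h3⟩) <;> simp only at h1 h2 h3 <;> omega
          · have hg := hgood c' hc'F hcp
            constructor <;> rintro (⟨h1, h2, h3⟩ | ⟨h1, h2, h3⟩) <;>
              simp only at h1 h2 h3 <;> omega
        have hmem := hFmax (p.1, p.1 + d) hac₀ hcomp
        have := hpmin (p.1, p.1 + d) hmem
        simp only at this
        omega
    -- the squeeze maps
    set M' : ℕ := M - (d - 1) with hM'
    set φ : ℕ → ℕ := fun x => if x ≤ p.1 then x else x - (d - 1) with hφ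
    set ψ : ℕ → ℕ := fun x => if x ≤ p.1 then x else x + (d - 1) with hψ
    have hgood' : ∀ q ∈ F, q ≠ p →
        (q.1 ≤ p.1 ∨ p.1 + d ≤ q.1) ∧ (q.2 ≤ p.1 ∨ p.1 + d ≤ q.2) := by
      intro q hq hqp
      have := hgood q hq hqp
      rw [hp2] at this
      exact this
    have hp1M : p.1 + d < M := by have := hpac.2.1; omega
    have hmono : ∀ x y : ℕ, (x ≤ p.1 ∨ p.1 + d ≤ x) → (y ≤ p.1 ∨ p.1 + d ≤ y) →
        (x < y ↔ φ x < φ y) := by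
      intro x y gx gy
      simp only [hφ]
      split_ifs <;> omega
    have hψmono : ∀ x y : ℕ, (x < y ↔ ψ x < ψ y) := by
      intro x y
      simp only [hψ]
      split_ifs <;> omega
    have hψgood : ∀ x : ℕ, ψ x ≤ p.1 ∨ p.1 + d ≤ ψ x := by
      intro x
      simp only [hψ]
      split_ifs <;> omega
    have hφψ : ∀ x : ℕ, φ (ψ x) = x := by
      intro x
      simp only [hφ, hψ]
      split_ifs <;> omega
    set F' : Finset (ℕ × ℕ) := (F.erase p).image (fun c => (φ c.1, φ c.2)) with hF'
    have hmemgood : ∀ q ∈ F.erase p, (q.1 ≤ p.1 ∨ p.1 + d ≤ q.1) ∧ (q.2 ≤ p.1 ∨ p.1 + d ≤ q.2) := by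
      intro q hq
      exact hgood' q (Finset.mem_of_mem_erase hq) (Finset.ne_of_mem_erase hq)
    -- lengths of other chords
    have hlen : ∀ q ∈ F.erase p, q.1 + d ≤ q.2 := by
      intro q hq
      have := hpmin q (Finset.mem_of_mem_erase hq)
      have := AC_len_ge hd (hFac q (Finset.mem_of_mem_erase hq))
      omega
    have hlenspan : ∀ q ∈ F.erase p, q.1 ≤ p.1 → p.1 + d ≤ q.2 → q.1 + (2 * d - 1) ≤ q.2 := by
      intro q hq h1 h2
      rcases len_cases hd (hFac q (Finset.mem_of_mem_erase hq)) with h | h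
      · exfalso
        apply Finset.ne_of_mem_erase hq
        have e1 : q.1 = p.1 := by omega
        have e2 : q.2 = p.2 := by omega
        exact Prod.ext e1 e2
      · exact h
    have hinj : Set.InjOn (fun c : ℕ × ℕ => (φ c.1, φ c.2)) (F.erase p) := by
      intro q hq q' hq' heq
      have g1 := hmemgood q hq
      have g2 := hmemgood q' hq'
      simp only [Prod.mk.injEq] at heq
      have e1 : q.1 = q'.1 := by
        have i1 := hmono q.1 q'.1 g1.1 g2.1
        have i2 := hmono q'.1 q.1 g2.1 g1.1
        omega
      have e2 : q.2 = q'.2 := by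
        have i1 := hmono q.2 q'.2 g1.2 g2.2
        have i2 := hmono q'.2 q.2 g2.2 g1.2
        omega
      exact Prod.ext e1 e2
    have hcardF' : F'.card = F.card - 1 := by
      rw [hF', Finset.card_image_of_injOn hinj, Finset.card_erase_of_mem hpF]
    have hcardpos : 1 ≤ F.card := Finset.card_pos.mpr hne
    -- apply induction hypothesis
    have hMlt : M' < M := by omega
    have hdvd' : (d - 1) ∣ (M' - 2) := by
      have heq : M' - 2 = (M - 2) - (d - 1) := by omega
      rw [heq]
      exact Nat.dvd_sub hdvd dvd_rfl
    have hge' : d + 1 ≤ M' := by omega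
    have hF'ac : ∀ c ∈ F', AC d M' c := by
      intro c hc
      rw [hF', Finset.mem_image] at hc
      obtain ⟨q, hq, rfl⟩ := hc
      have hqac := hFac q (Finset.mem_of_mem_erase hq)
      obtain ⟨ha1, ha2, ha3, ha4⟩ := hqac
      have hg := hmemgood q hq
      rcases hg.1 with h1 | h1 <;> rcases hg.2 with h2 | h2
      · -- both low
        have e1 : φ q.1 = q.1 := by simp only [hφ]; rw [if_pos h1]
        have e2 : φ q.2 = q.2 := by simp only [hφ]; rw [if_pos h2]
        refine ⟨?_, ?_, ?_, ?_⟩ <;> simp only [e1, e2]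
        · exact ha1
        · omega
        · omega
        · exact ha4
      · -- spanning
        have hsp := hlenspan q hq h1 h2
        have e1 : φ q.1 = q.1 := by simp only [hφ]; rw [if_pos h1]
        have e2 : φ q.2 = q.2 - (d - 1) := by simp only [hφ]; rw [if_neg (by omega)]
        refine ⟨?_, ?_, ?_, ?_⟩ <;> simp only [e1, e2]
        · omega
        · omega
        · omega
        · have heq : q.2 - (d - 1) - q.1 - 1 = (q.2 - q.1 - 1) - (d - 1) := by omega
          rw [heq]
          exact Nat.dvd_sub ha4 dvd_rfl
      · -- impossible
        omega
      · -- both high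
        have e1 : φ q.1 = q.1 - (d - 1) := by simp only [hφ]; rw [if_neg (by omega)]
        have e2 : φ q.2 = q.2 - (d - 1) := by simp only [hφ]; rw [if_neg (by omega)]
        refine ⟨?_, ?_, ?_, ?_⟩ <;> simp only [e1, e2]
        · omega
        · omega
        · omega
        · have heq : q.2 - (d - 1) - (q.1 - (d - 1)) - 1 = q.2 - q.1 - 1 := by omega
          rw [heq]
          exact ha4
    have hF'nc : ∀ c ∈ F', ∀ c' ∈ F', ¬ XC c c' := by
      intro c hc c' hc'
      rw [hF', Finset.mem_image] at hc hc'
      obtain ⟨q, hq, rfl⟩ := hc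
      obtain ⟨q', hq', rfl⟩ := hc'
      have g1 := hmemgood q hq
      have g2 := hmemgood q' hq'
      intro hxc
      apply hFnc q (Finset.mem_of_mem_erase hq) q' (Finset.mem_of_mem_erase hq')
      rcases hxc with ⟨h1, h2, h3⟩ | ⟨h1, h2, h3⟩
      · exact Or.inl ⟨(hmono _ _ g1.1 g2.1).mpr h1, (hmono _ _ g2.1 g1.2).mpr h2,
          (hmono _ _ g1.2 g2.2).mpr h3⟩
      · exact Or.inr ⟨(hmono _ _ g2.1 g1.1).mpr h1, (hmono _ _ g1.1 g2.2).mpr h2,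
          (hmono _ _ g2.2 g1.2).mpr h3⟩
    have hF'max : ∀ c, AC d M' c → (∀ c' ∈ F', ¬ XC c c' ∧ ¬ XC c' c) → c ∈ F' := by
      intro c' hac' hcomp'
      set c : ℕ × ℕ := (ψ c'.1, ψ c'.2) with hc
      obtain ⟨hb1, hb2, hb3, hb4⟩ := hac'
      have hacc : AC d M c := by
        by_cases k1 : c'.1 ≤ p.1 <;> by_cases k2 : c'.2 ≤ p.1
        · have e1 : ψ c'.1 = c'.1 := by simp only [hψ]; rw [if_pos k1]
          have e2 : ψ c'.2 = c'.2 := by simp only [hψ]; rw [if_pos k2]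
          refine ⟨?_, ?_, ?_, ?_⟩ <;> simp only [hc, e1, e2]
          · exact hb1
          · omega
          · omega
          · exact hb4
        · have e1 : ψ c'.1 = c'.1 := by simp only [hψ]; rw [if_pos k1]
          have e2 : ψ c'.2 = c'.2 + (d - 1) := by simp only [hψ]; rw [if_neg k2]
          refine ⟨?_, ?_, ?_, ?_⟩ <;> simp only [hc, e1, e2]
          · omega
          · omega
          · omega
          · have heq : c'.2 + (d - 1) - c'.1 - 1 = (c'.2 - c'.1 - 1) + (d - 1) := by omega
            rw [heq]
            exact Nat.dvd_add hb4 dvd_rfl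
        · omega
        · have e1 : ψ c'.1 = c'.1 + (d - 1) := by simp only [hψ]; rw [if_neg k1]
          have e2 : ψ c'.2 = c'.2 + (d - 1) := by simp only [hψ]; rw [if_neg k2]
          refine ⟨?_, ?_, ?_, ?_⟩ <;> simp only [hc, e1, e2]
          · omega
          · omega
          · omega
          · have heq : c'.2 + (d - 1) - (c'.1 + (d - 1)) - 1 = c'.2 - c'.1 - 1 := by omega
            rw [heq]
            exact hb4
      have hcompF : ∀ q ∈ F, ¬ XC c q ∧ ¬ XC q c := by
        intro q hqF
        by_cases hqp : q = p
        · subst hqp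
          have g1 := hψgood c'.1
          have g2 := hψgood c'.2
          constructor <;> rintro (⟨h1, h2, h3⟩ | ⟨h1, h2, h3⟩) <;>
            simp only [hc] at h1 h2 h3 <;> omega
        · have hqerase : q ∈ F.erase p := Finset.mem_erase.mpr ⟨hqp, hqF⟩
          have hφq : ((fun c : ℕ × ℕ => (φ c.1, φ c.2)) q) ∈ F' := by
            rw [hF']
            exact Finset.mem_image_of_mem _ hqerase
          have hcq := hcomp' _ hφq
          have gq := hmemgood q hqerase
          have gc1 := hψgood c'.1
          have gc2 := hψgood c'.2
          constructor
          · rintro (⟨h1, h2, h3⟩ | ⟨h1, h2, h3⟩)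
            · apply hcq.1
              refine Or.inl ⟨?_, ?_, ?_⟩ <;> simp only [hc] at h1 h2 h3 ⊢
              · have := (hmono _ _ gc1 gq.1).mp h1; rwa [hφψ] at this
              · have := (hmono _ _ gq.1 gc2).mp h2; rwa [hφψ] at this
              · have := (hmono _ _ gc2 gq.2).mp h3; rwa [hφψ] at this
            · apply hcq.1
              refine Or.inr ⟨?_, ?_, ?_⟩ <;> simp only [hc] at h1 h2 h3 ⊢
              · have := (hmono _ _ gq.1 gc1).mp h1; rwa [hφψ] at this
              · have := (hmono _ _ gc1 gq.2).mp h2; rwa [hφψ] at this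
              · have := (hmono _ _ gq.2 gc2).mp h3; rwa [hφψ] at this
          · rintro (⟨h1, h2, h3⟩ | ⟨h1, h2, h3⟩)
            · apply hcq.2
              refine Or.inl ⟨?_, ?_, ?_⟩ <;> simp only [hc] at h1 h2 h3 ⊢
              · have := (hmono _ _ gq.1 gc1).mp h1; rwa [hφψ] at this
              · have := (hmono _ _ gc1 gq.2).mp h2; rwa [hφψ] at this
              · have := (hmono _ _ gq.2 gc2).mp h3; rwa [hφψ] at this
            · apply hcq.2
              refine Or.inr ⟨?_, ?_, ?_⟩ <;> simp only [hc] at h1 h2 h3 ⊢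
              · have := (hmono _ _ gc1 gq.1).mp h1; rwa [hφψ] at this
              · have := (hmono _ _ gq.1 gc2).mp h2; rwa [hφψ] at this
              · have := (hmono _ _ gc2 gq.2).mp h3; rwa [hφψ] at this
      have hcF := hFmax c hacc hcompF
      have hcp : c ≠ p := by
        intro hcontra
        have e1 : ψ c'.1 = p.1 := congrArg Prod.fst hcontra
        have e2 : ψ c'.2 = p.2 := congrArg Prod.snd hcontra
        rw [hp2] at e2
        simp only [hψ] at e1 e2
        split_ifs at e1 e2 <;> omega
      have : c ∈ F.erase p := Finset.mem_erase.mpr ⟨hcp, hcF⟩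
      have hmem : ((fun q : ℕ × ℕ => (φ q.1, φ q.2)) c) ∈ F' := by
        rw [hF']
        exact Finset.mem_image_of_mem _ this
      have heqc : ((fun q : ℕ × ℕ => (φ q.1, φ q.2)) c) = c' := by
        simp only [hc]
        rw [hφψ, hφψ]
      rwa [heqc] at hmem
    have hIH := ih M' hMlt hdvd' hge' F' hF'ac hF'nc hF'max
    have hcard2 : F.card = F'.card + 1 := by omega
    rw [hcard2, Nat.succ_mul]
    rw [hIH]
    omega
end Abstract
section Transfer
variable {d ℓ N : ℕ} [NeZero N]

def toF {N : ℕ} [NeZero N] : Sym2 (ZMod N) → ℕ × ℕ :=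
  Sym2.lift ⟨fun x y => (min x.val y.val, max x.val y.val),
    fun x y => by simp [min_comm, max_comm]⟩

lemma toF_sorted {x y : ZMod N} (h : x.val ≤ y.val) : toF s(x, y) = (x.val, y.val) := by
  simp [toF, min_eq_left h, max_eq_right h]

lemma crosses_iff_XC {x y z w : ZMod N} (hxy : x.val < y.val) (hzw : z.val < w.val) :
    Crosses N s(x, y) s(z, w) ↔ XC (x.val, y.val) (z.val, w.val) := by
  rw [crosses_iff]
  have hB : (y - x).val = y.val - x.val := val_sub_of_le (le_of_lt hxy)
  have hxN := val_lt' x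
  have hyN := val_lt' y
  have hzN := val_lt' z
  have hwN := val_lt' w
  unfold XC
  simp only
  rcases le_or_gt x.val z.val with hxz | hxz
  · have hC : (z - x).val = z.val - x.val := val_sub_of_le hxz
    have hE : (w - x).val = w.val - x.val := val_sub_of_le (by omega)
    rw [hB, hC, hE]
    omega
  · have hC : (z - x).val = z.val + N - x.val := val_sub_of_gt hxz
    rcases le_or_gt x.val w.val with hxw | hxw
    · have hE : (w - x).val = w.val - x.val := val_sub_of_le hxw
      rw [hB, hC, hE]
      omega
    · have hE : (w - x).val = w.val + N - x.val := val_sub_of_gt hxw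
      rw [hB, hC, hE]
      omega

lemma diag_toF_AC (hN2 : (d - 1) ∣ (N - 2)) {p : Sym2 (ZMod N)} (hp : IsDiag d N p) :
    AC d N (toF p) := by
  obtain ⟨x, y, rfl, hlt, h1, h2, h3⟩ := isDiag_rep hN2 hp
  rw [toF_sorted (le_of_lt hlt)]
  have hyN := val_lt' y
  exact ⟨by omega, by omega, by omega, h3⟩

lemma AC_lift (hN2 : (d - 1) ∣ (N - 2)) {c : ℕ × ℕ} (hc : AC d N c) :
    IsDiag d N s(((c.1 : ℕ) : ZMod N), ((c.2 : ℕ) : ZMod N)) ∧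
      toF s(((c.1 : ℕ) : ZMod N), ((c.2 : ℕ) : ZMod N)) = c := by
  obtain ⟨h1, h2, h3, h4⟩ := hc
  have hv1 : ((c.1 : ℕ) : ZMod N).val = c.1 := ZMod.val_cast_of_lt (by omega)
  have hv2 : ((c.2 : ℕ) : ZMod N).val = c.2 := ZMod.val_cast_of_lt h2
  have hsub : (((c.2 : ℕ) : ZMod N) - ((c.1 : ℕ) : ZMod N)).val = c.2 - c.1 := by
    rw [val_sub_of_le (by omega), hv1, hv2]
  constructor
  · exact ⟨_, _, rfl, by rw [hsub]; omega, by rw [hsub]; omega, by rw [hsub]; exact h4⟩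
  · rw [toF_sorted (by omega), hv1, hv2]

lemma mem_of_addable {T : Set (Sym2 (ZMod N))} (hT : IsAngulation d N T)
    {q : Sym2 (ZMod N)} (hq : IsDiag d N q)
    (hcomp : ∀ p ∈ T, ¬ Crosses N p q ∧ ¬ Crosses N q p) : q ∈ T := by
  have h3 := hT.2.2 (T ∪ {q}) ?_ ?_ Set.subset_union_left
  · rw [← h3]
    exact Set.mem_union_right _ rfl
  · rintro p (hp | hp)
    · exact hT.1 p hp
    · rw [Set.mem_singleton_iff] at hp
      subst hp
      exact hq
  · rintro p (hp | hp) q' (hq' | hq')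
    · exact hT.2.1 p hp q' hq'
    · rw [Set.mem_singleton_iff] at hq'
      subst hq'
      exact (hcomp p hp).1
    · rw [Set.mem_singleton_iff] at hp
      subst hp
      exact (hcomp q' hq').2
    · rw [Set.mem_singleton_iff] at hp hq'
      subst hp
      subst hq'
      exact not_crosses_self q'

theorem angulation_ncard (hd : 2 ≤ d) (hl : 2 ≤ ℓ) (hN : N = (d - 1) * ℓ + 2)
    {T : Set (Sym2 (ZMod N))} (hT : IsAngulation d N T) : T.ncard = ℓ - 1 := by
  have hN2 : N - 2 = (d - 1) * ℓ := by rw [hN]; omega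
  have hN2' : (d - 1) ∣ (N - 2) := by rw [hN2]; exact dvd_mul_right _ _
  have hdl : 1 * 2 ≤ (d - 1) * ℓ := Nat.mul_le_mul (by omega) hl
  have hgeN : d + 1 ≤ N := by
    have : (d - 1) * 2 ≤ (d - 1) * ℓ := Nat.mul_le_mul_left _ hl
    omega
  have hfin : T.Finite := Set.toFinite T
  set Ffin := hfin.toFinset with hFfin
  set F : Finset (ℕ × ℕ) := Ffin.image toF with hF
  have hmemT : ∀ p, p ∈ Ffin ↔ p ∈ T := fun p => Set.Finite.mem_toFinset hfin
  have hinj : Set.InjOn toF (↑Ffin : Set (Sym2 (ZMod N))) := by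
    intro p hp q hq heq
    obtain ⟨xp, yp, hp1, hp2, _⟩ := isDiag_rep hN2' (hT.1 p ((hmemT p).mp hp))
    obtain ⟨xq, yq, hq1, hq2, _⟩ := isDiag_rep hN2' (hT.1 q ((hmemT q).mp hq))
    rw [hp1, hq1, toF_sorted (le_of_lt hp2), toF_sorted (le_of_lt hq2)] at heq
    simp only [Prod.mk.injEq] at heq
    rw [hp1, hq1, val_eq_val_iff.mp heq.1, val_eq_val_iff.mp heq.2]
  have hcardF : F.card = T.ncard := by
    rw [hF, Finset.card_image_of_injOn hinj, hFfin, Set.ncard_eq_toFinset_card _ hfin]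
  have habs := abstract_count hd N hN2' hgeN F ?_ ?_ ?_
  · have : (T.ncard + 1) * (d - 1) = (d - 1) * ℓ := by rw [← hcardF, habs, hN2]
    have h2 : (ℓ - 1 + 1) * (d - 1) = (d - 1) * ℓ := by
      rw [show ℓ - 1 + 1 = ℓ by omega, Nat.mul_comm]
    have := Nat.eq_of_mul_eq_mul_right (show 0 < d - 1 by omega) (this.trans h2.symm)
    omega
  · intro c hc
    rw [hF, Finset.mem_image] at hc
    obtain ⟨p, hp, rfl⟩ := hc
    exact diag_toF_AC hN2' (hT.1 p ((hmemT p).mp hp))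
  · intro c hc c' hc'
    rw [hF, Finset.mem_image] at hc hc'
    obtain ⟨p, hp, rfl⟩ := hc
    obtain ⟨q, hq, rfl⟩ := hc'
    obtain ⟨xp, yp, hp1, hp2, _⟩ := isDiag_rep hN2' (hT.1 p ((hmemT p).mp hp))
    obtain ⟨xq, yq, hq1, hq2, _⟩ := isDiag_rep hN2' (hT.1 q ((hmemT q).mp hq))
    rw [hp1, hq1, toF_sorted (le_of_lt hp2), toF_sorted (le_of_lt hq2)]
    intro hxc
    exact hT.2.1 p ((hmemT p).mp hp) q ((hmemT q).mp hq)
      (by rw [hp1, hq1]; exact (crosses_iff_XC hp2 hq2).mpr hxc)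
  · intro c hc hcomp
    obtain ⟨hdiag, htoF⟩ := AC_lift hN2' hc
    have hc1lt : ((c.1 : ℕ) : ZMod N).val < ((c.2 : ℕ) : ZMod N).val := by
      rw [ZMod.val_cast_of_lt (show c.1 < N by have := hc.1; have := hc.2.1; omega),
        ZMod.val_cast_of_lt hc.2.1]
      have := hc.1
      omega
    have hmem : s(((c.1 : ℕ) : ZMod N), ((c.2 : ℕ) : ZMod N)) ∈ T := by
      apply mem_of_addable hT hdiag
      intro p hp
      obtain ⟨xp, yp, hp1, hp2, _⟩ := isDiag_rep hN2' (hT.1 p hp)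
      have hpF : toF p ∈ F := by
        rw [hF, Finset.mem_image]
        exact ⟨p, (hmemT p).mpr hp, rfl⟩
      have hcmp := hcomp (toF p) hpF
      constructor
      · rw [hp1]
        intro hcross
        apply hcmp.2
        rw [← htoF, hp1, toF_sorted (le_of_lt hp2), toF_sorted (le_of_lt hc1lt)]
        exact (crosses_iff_XC hp2 hc1lt).mp hcross
      · rw [hp1]
        intro hcross
        apply hcmp.1
        rw [← htoF, hp1, toF_sorted (le_of_lt hp2), toF_sorted (le_of_lt hc1lt)]
        exact (crosses_iff_XC hc1lt hp2).mp hcross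
    rw [← htoF, hF, Finset.mem_image]
    exact ⟨_, (hmemT _).mpr hmem, rfl⟩

lemma exists_angulation_ext {S : Set (Sym2 (ZMod N))}
    (hS1 : ∀ p ∈ S, IsDiag d N p) (hS2 : ∀ p ∈ S, ∀ q ∈ S, ¬ Crosses N p q) :
    ∃ S', IsAngulation d N S' ∧ S ⊆ S' := by
  set 𝒞 : Set (Set (Sym2 (ZMod N))) :=
    {S' | S ⊆ S' ∧ (∀ p ∈ S', IsDiag d N p) ∧ ∀ p ∈ S', ∀ q ∈ S', ¬ Crosses N p q} with h𝒞
  have hCfin : 𝒞.Finite := Set.toFinite _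
  have hCne : 𝒞.Nonempty := ⟨S, subset_rfl, hS1, hS2⟩
  obtain ⟨S', hS'mem, hS'max⟩ := Set.Finite.exists_maximalFor Set.ncard 𝒞 hCfin hCne
  refine ⟨S', ⟨hS'mem.2.1, hS'mem.2.2, ?_⟩, hS'mem.1⟩
  intro S'' h1 h2 hsub
  have hmem'' : S'' ∈ 𝒞 := ⟨hS'mem.1.trans hsub, h1, h2⟩
  have hle : S'.ncard ≤ S''.ncard := Set.ncard_le_ncard hsub (Set.toFinite _)
  have heq := le_antisymm hle (hS'max hmem'' hle)
  exact (Set.eq_of_subset_of_ncard_le hsub (le_of_eq heq.symm) (Set.toFinite _)).symm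

lemma isAngulation_of_card (hd : 2 ≤ d) (hl : 2 ≤ ℓ) (hN : N = (d - 1) * ℓ + 2)
    {T : Set (Sym2 (ZMod N))} (h1 : ∀ p ∈ T, IsDiag d N p)
    (h2 : ∀ p ∈ T, ∀ q ∈ T, ¬ Crosses N p q) (h3 : T.ncard = ℓ - 1) :
    IsAngulation d N T := by
  refine ⟨h1, h2, ?_⟩
  intro S hS1 hS2 hsub
  obtain ⟨S', hS', hsub'⟩ := exists_angulation_ext hS1 hS2
  have hcard' : S'.ncard = ℓ - 1 := angulation_ncard hd hl hN hS'
  have hTS' : T ⊆ S' := hsub.trans hsub'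
  have hTeq : T = S' :=
    Set.eq_of_subset_of_ncard_le hTS' (by rw [hcard', h3]) (Set.toFinite _)
  apply Set.Subset.antisymm
  · rw [hTeq]
    exact hsub'
  · exact hsub

end Transfer
section Orbits

lemma card_dvd_of_free {α : Type*} [DecidableEq α] (g : α → α) (hginj : Function.Injective g)
    (r : ℕ) (hr : 0 < r) (hgr : ∀ x, g^[r] x = x) :
    ∀ n : ℕ, ∀ s : Finset α, s.card = n → (∀ x ∈ s, g x ∈ s) →
      (∀ x ∈ s, ∀ j, 0 < j → j < r → g^[j] x ≠ x) → r ∣ s.card := by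
  intro n
  induction n using Nat.strong_induction_on with
  | _ n ih =>
  intro s hcard hclosed hfree
  rcases s.eq_empty_or_nonempty with rfl | ⟨x, hx⟩
  · simp
  · set O : Finset α := (Finset.range r).image (fun j => g^[j] x) with hO
    have hiter : ∀ j : ℕ, g^[j] x ∈ s := by
      intro j
      induction j with
      | zero => exact hx
      | succ j ihj => rw [Function.iterate_succ_apply']; exact hclosed _ ihj
    have hOsub : O ⊆ s := by
      intro y hy
      rw [hO, Finset.mem_image] at hy
      obtain ⟨j, _, rfl⟩ := hy
      exact hiter j
    have hkey : ∀ i j : ℕ, i < j → j < r → g^[i] x = g^[j] x → False := by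
      intro i j hij hjr heq
      have h1 : g^[i] (g^[j - i] x) = g^[i] x := by
        rw [← Function.iterate_add_apply, show i + (j - i) = j by omega]
        exact heq.symm
      have h2 : g^[j - i] x = x := Function.Injective.iterate hginj i h1
      exact hfree x hx (j - i) (by omega) (by omega) h2
    have hinjO : Set.InjOn (fun j => g^[j] x) (↑(Finset.range r) : Set ℕ) := by
      intro i hi j hj heq
      simp only [Finset.coe_range, Set.mem_Iio] at hi hj
      rcases lt_trichotomy i j with h | h | h
      · exact absurd (hkey i j h hj heq) not_false
      · exact h
      · exact absurd (hkey j i h hi heq.symm) not_false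
    have hOcard : O.card = r := by
      rw [hO, Finset.card_image_of_injOn hinjO, Finset.card_range]
    have hxO : x ∈ O := by
      rw [hO, Finset.mem_image]
      exact ⟨0, Finset.mem_range.mpr hr, rfl⟩
    set s' := s \ O with hs'
    have hs'card : s'.card = s.card - r := by
      rw [hs', Finset.card_sdiff_of_subset hOsub, hOcard]
    have hclosed' : ∀ y ∈ s', g y ∈ s' := by
      intro y hy
      rw [hs', Finset.mem_sdiff] at hy ⊢
      refine ⟨hclosed y hy.1, ?_⟩
      intro hgy
      rw [hO, Finset.mem_image] at hgy
      obtain ⟨j, hj, hjeq⟩ := hgy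
      rw [Finset.mem_range] at hj
      apply hy.2
      rw [hO, Finset.mem_image]
      match j, hjeq with
      | 0, hjeq =>
        refine ⟨r - 1, Finset.mem_range.mpr (by omega), ?_⟩
        apply hginj
        rw [← Function.iterate_succ_apply' g (r - 1) x, show (r - 1).succ = r by omega, hgr]
        exact hjeq
      | (j+1), hjeq =>
        refine ⟨j, Finset.mem_range.mpr (by omega), ?_⟩
        apply hginj
        rw [← Function.iterate_succ_apply' g j x]
        exact hjeq
    have hfree' : ∀ y ∈ s', ∀ j, 0 < j → j < r → g^[j] y ≠ y := by
      intro y hy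
      exact hfree y (Finset.mem_sdiff.mp hy).1
    have hrles : r ≤ s.card := by
      rw [← hOcard]
      exact Finset.card_le_card hOsub
    have hlt : s.card - r < n := by omega
    have hIH := ih (s.card - r) hlt s' (by rw [hs'card]) hclosed' hfree'
    rw [hs'card] at hIH
    obtain ⟨k, hk⟩ := hIH
    exact ⟨k + 1, by rw [Nat.mul_add, Nat.mul_one]; omega⟩

end Orbits

section Arith

lemma gcd_N_dsub1 {d ℓ N : ℕ} (hN : N = (d - 1) * ℓ + 2) : Nat.gcd N (d - 1) ∣ 2 := by
  have h1 : Nat.gcd N (d - 1) ∣ N := Nat.gcd_dvd_left _ _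
  have h2 : Nat.gcd N (d - 1) ∣ (d - 1) * ℓ := Dvd.dvd.mul_right (Nat.gcd_dvd_right _ _) ℓ
  have h3 := Nat.dvd_sub h1 h2
  have he : N - (d - 1) * ℓ = 2 := by rw [hN]; omega
  rwa [he] at h3

lemma key_identity {d ℓ N : ℕ} (hd : 2 ≤ d) (hl : 2 ≤ ℓ) (hN : N = (d - 1) * ℓ + 2) :
    (d - 1) * (ℓ - 1) + (d + 1) = N := by
  obtain ⟨a, rfl⟩ : ∃ a, d = a + 2 := ⟨d - 2, by omega⟩
  obtain ⟨b, rfl⟩ : ∃ b, ℓ = b + 2 := ⟨ℓ - 2, by omega⟩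
  rw [hN, show a + 2 - 1 = a + 1 from by omega, show b + 2 - 1 = b + 1 from by omega]
  ring

lemma sum_identity {d ℓ N : ℕ} (hd : 2 ≤ d) (hl : 2 ≤ ℓ) (hN : N = (d - 1) * ℓ + 2) :
    (d + 1) * ℓ = N + 2 * (ℓ - 1) := by
  obtain ⟨a, rfl⟩ : ∃ a, d = a + 2 := ⟨d - 2, by omega⟩
  obtain ⟨b, rfl⟩ : ∃ b, ℓ = b + 2 := ⟨ℓ - 2, by omega⟩
  rw [hN, show a + 2 - 1 = a + 1 from by omega, show b + 2 - 1 = b + 1 from by omega]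
  ring

lemma arith3 {d ℓ n N r : ℕ} (hd : 2 ≤ d) (hl : 2 ≤ ℓ) (hN : N = (d - 1) * ℓ + 2)
    (hrl : r ∣ ℓ - 1) (hrN : r ∣ N) (hdvd : (N / r) ∣ n * (d - 1)) :
    N ∣ Nat.gcd (d + 1) (2 * (ℓ - 1)) * n := by
  have hrpos : 0 < r := by
    rcases Nat.eq_zero_or_pos r with h | h
    · subst h
      rw [Nat.zero_dvd] at hrl
      omega
    · exact h
  have hkey := key_identity hd hl hN
  have hd1 : r ∣ (d + 1) := by
    have h1 : r ∣ (d - 1) * (ℓ - 1) := Dvd.dvd.mul_left hrl (d - 1)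
    have h3 := Nat.dvd_sub hrN h1
    rwa [show N - (d - 1) * (ℓ - 1) = d + 1 from by omega] at h3
  have hrt : r ∣ Nat.gcd (d + 1) (2 * (ℓ - 1)) :=
    Nat.dvd_gcd hd1 (Dvd.dvd.mul_left hrl 2)
  have hNr : r * (N / r) = N := Nat.mul_div_cancel' hrN
  have hg2 : Nat.gcd (N / r) (d - 1) ∣ 2 := by
    apply dvd_trans _ (gcd_N_dsub1 hN)
    exact Nat.dvd_gcd (dvd_trans (Nat.gcd_dvd_left _ _) (Nat.div_dvd_of_dvd hrN))
      (Nat.gcd_dvd_right _ _)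
  rcases (Nat.dvd_prime Nat.prime_two).mp hg2 with hg1 | hg1
  · have hcop : Nat.Coprime (N / r) (d - 1) := hg1
    have hdivn : (N / r) ∣ n := hcop.dvd_of_dvd_mul_right hdvd
    have hNrn : N ∣ r * n := by
      rw [← hNr]
      exact mul_dvd_mul_left r hdivn
    obtain ⟨t', ht'⟩ := hrt
    rw [ht', show (r * t') * n = (r * n) * t' from by ring]
    exact Dvd.dvd.mul_right hNrn t'
  · have h2Nr : 2 ∣ N / r := hg1 ▸ Nat.gcd_dvd_left _ _
    have h2d : 2 ∣ d - 1 := hg1 ▸ Nat.gcd_dvd_right _ _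
    obtain ⟨u, hu⟩ := h2Nr
    obtain ⟨cc, hcc⟩ := h2d
    have hcop : Nat.Coprime u cc := by
      have hh := Nat.gcd_mul_left 2 u cc
      rw [← hu, ← hcc, hg1] at hh
      have : Nat.gcd u cc = 1 := by omega
      exact this
    have hudvd : u ∣ n := by
      have h' : 2 * u ∣ n * (2 * cc) := by rw [← hu, ← hcc]; exact hdvd
      have h'' : 2 * u ∣ 2 * (n * cc) := by
        rw [show 2 * (n * cc) = n * (2 * cc) from by ring]
        exact h'
      have h3 := (mul_dvd_mul_iff_left (two_ne_zero)).mp h''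
      exact hcop.dvd_of_dvd_mul_right h3
    have hNr2n : N ∣ 2 * (r * n) := by
      rw [← hNr, hu, show r * (2 * u) = 2 * (r * u) from by ring]
      exact mul_dvd_mul_left 2 (mul_dvd_mul_left r hudvd)
    set α := r.factorization 2 with hα
    set ρ := r / 2 ^ α with hρ
    have hfact : 2 ^ α * ρ = r := Nat.ordProj_mul_ordCompl_eq_self r 2
    have hρodd : ¬ 2 ∣ ρ := Nat.not_dvd_ordCompl Nat.prime_two (by omega)
    have hpow : 2 ^ (α + 1) ∣ d + 1 := by
      rcases Nat.eq_zero_or_pos α with hα0 | hαpos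
      · rw [hα0, pow_one]
        exact ⟨cc + 1, by omega⟩
      · have h2r : 2 ∣ r := by
          rw [← hfact]
          exact Dvd.dvd.mul_right (dvd_pow_self 2 (by omega)) ρ
        have hℓodd : ¬ 2 ∣ ℓ := by
          have h2l1 : 2 ∣ ℓ - 1 := dvd_trans h2r hrl
          omega
        have hp1 : 2 ^ (α + 1) ∣ N := by
          rw [← hNr, hu, ← hfact]
          exact ⟨ρ * u, by ring⟩
        have hp2 : 2 ^ (α + 1) ∣ 2 * (ℓ - 1) := by
          have hαl : 2 ^ α ∣ ℓ - 1 := dvd_trans ⟨ρ, hfact.symm⟩ hrl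
          obtain ⟨w, hw⟩ := hαl
          exact ⟨w, by rw [hw]; ring⟩
        have hsum := sum_identity hd hl hN
        have hdl : 2 ^ (α + 1) ∣ (d + 1) * ℓ := hsum ▸ dvd_add hp1 hp2
        have hcopl : Nat.Coprime (2 ^ (α + 1)) ℓ :=
          Nat.Coprime.pow_left _ ((Nat.prime_two.coprime_iff_not_dvd).mpr hℓodd)
        exact hcopl.dvd_of_dvd_mul_right hdl
    have h2r_d : 2 * r ∣ d + 1 := by
      have hρd : ρ ∣ d + 1 := dvd_trans ⟨2 ^ α, by rw [← hfact]; ring⟩ hd1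
      have hcop2 : Nat.Coprime (2 ^ (α + 1)) ρ :=
        Nat.Coprime.pow_left _ ((Nat.prime_two.coprime_iff_not_dvd).mpr hρodd)
      have hh := Nat.Coprime.mul_dvd_of_dvd_of_dvd hcop2 hpow hρd
      rwa [show 2 ^ (α + 1) * ρ = 2 * r from by rw [← hfact]; ring] at hh
    have h2rt : 2 * r ∣ Nat.gcd (d + 1) (2 * (ℓ - 1)) :=
      Nat.dvd_gcd h2r_d (mul_dvd_mul_left 2 hrl)
    obtain ⟨t', ht'⟩ := h2rt
    rw [ht', show (2 * r * t') * n = (2 * (r * n)) * t' from by ring]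
    exact Dvd.dvd.mul_right hNr2n t'

end Arith
section Arith2

lemma arith2 {d ℓ n N : ℕ} (hd : 2 ≤ d) (hl : 2 ≤ ℓ) (hN : N = (d - 1) * ℓ + 2)
    (h2 : N ∣ 2 * (n * (d - 1))) (h1 : ¬ N ∣ n * (d - 1)) :
    N ∣ 2 * n ∨ N ∣ Nat.gcd (d + 1) (2 * (ℓ - 1)) * n := by
  rcases Nat.even_or_odd d with hde | hdo
  · left
    have hg := gcd_N_dsub1 hN
    have hg1 : Nat.gcd N (d - 1) = 1 := by
      rcases (Nat.dvd_prime Nat.prime_two).mp hg with h | h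
      · exact h
      · exfalso
        have h2d : 2 ∣ d - 1 := h ▸ Nat.gcd_dvd_right _ _
        obtain ⟨k, hk⟩ := hde
        omega
    have hcop : Nat.Coprime N (d - 1) := hg1
    have h2' : N ∣ (2 * n) * (d - 1) := by
      rw [show (2 * n) * (d - 1) = 2 * (n * (d - 1)) from by ring]
      exact h2
    exact hcop.dvd_of_dvd_mul_right h2'
  · right
    obtain ⟨e, he⟩ : ∃ e, d = 2 * e + 1 := by
      rcases hdo with ⟨e, he⟩
      exact ⟨e, by omega⟩
    have he1 : 1 ≤ e := by omega
    have hd1e : d - 1 = 2 * e := by omega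
    set M₁ := e * ℓ + 1 with hM₁
    have hNM : N = 2 * M₁ := by rw [hN, hd1e, hM₁]; ring
    have hM1dvd : M₁ ∣ (2 * n) * e := by
      have hh : 2 * M₁ ∣ 2 * ((2 * n) * e) := by
        rw [← hNM, show 2 * ((2 * n) * e) = 2 * (n * (2 * e)) from by ring, ← hd1e]
        exact h2
      exact (mul_dvd_mul_iff_left two_ne_zero).mp hh
    have hcop : Nat.Coprime M₁ e := by
      have hh : Nat.gcd e (1 + ℓ * e) = Nat.gcd e 1 := Nat.gcd_add_mul_right_right e 1 ℓ
      rw [Nat.gcd_one_right] at hh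
      have hg : Nat.gcd e M₁ = 1 := by
        rw [hM₁, show e * ℓ + 1 = 1 + ℓ * e from by ring]
        exact hh
      exact Nat.coprime_comm.mp hg
    have hM2n : M₁ ∣ 2 * n := hcop.dvd_of_dvd_mul_right hM1dvd
    have hnM1 : ¬ M₁ ∣ n * e := by
      intro hcon
      apply h1
      rw [hNM, hd1e, show n * (2 * e) = 2 * (n * e) from by ring]
      exact mul_dvd_mul_left 2 hcon
    have hM1even : 2 ∣ M₁ := by
      by_contra hodd
      have hcop2 : Nat.Coprime M₁ 2 :=
        Nat.coprime_comm.mp ((Nat.prime_two.coprime_iff_not_dvd).mpr hodd)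
      have hMn : M₁ ∣ n := hcop2.dvd_of_dvd_mul_left hM2n
      exact hnM1 (Dvd.dvd.mul_right hMn e)
    obtain ⟨M₂, hM₂⟩ := hM1even
    have hM₂1 : 1 ≤ M₂ := by omega
    have heℓ : Odd (e * ℓ) := by
      have hh : e * ℓ = 2 * M₂ - 1 := by omega
      rw [hh]
      exact ⟨M₂ - 1, by omega⟩
    have heodd : Odd e := (Nat.odd_mul.mp heℓ).1
    have hℓodd : Odd ℓ := (Nat.odd_mul.mp heℓ).2
    have hM₂n : M₂ ∣ n := by
      have hh : 2 * M₂ ∣ 2 * n := hM₂ ▸ hM2n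
      exact (mul_dvd_mul_iff_left two_ne_zero).mp hh
    have ht : Nat.gcd (d + 1) (2 * (ℓ - 1)) = 2 * Nat.gcd (e + 1) (ℓ - 1) := by
      rw [show d + 1 = 2 * (e + 1) from by omega]
      exact Nat.gcd_mul_left 2 (e + 1) (ℓ - 1)
    have h2g : 2 ∣ Nat.gcd (e + 1) (ℓ - 1) := by
      apply Nat.dvd_gcd
      · obtain ⟨w, hw⟩ := heodd
        exact ⟨w + 1, by omega⟩
      · obtain ⟨w, hw⟩ := hℓodd
        exact ⟨w, by omega⟩
    obtain ⟨G₃, hG₃⟩ := h2g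
    rw [ht, hG₃, hNM, hM₂]
    obtain ⟨w, hw⟩ := hM₂n
    exact ⟨G₃ * w, by rw [hw]; ring⟩

end Arith2

section Necessity
variable {d ℓ n N : ℕ} [NeZero N]

theorem necessity (hd : 2 ≤ d) (hl : 2 ≤ ℓ) (hN : N = (d - 1) * ℓ + 2)
    {T : Set (Sym2 (ZMod N))} (hT : IsAngulation d N T)
    (hrot : rot N (n * (d - 1)) '' T = T) :
    N ∣ 2 * n ∨ N ∣ Nat.gcd (d + 1) (2 * (ℓ - 1)) * n := by
  have hN2' : (d - 1) ∣ (N - 2) := by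
    have : N - 2 = (d - 1) * ℓ := by rw [hN]; omega
    rw [this]
    exact dvd_mul_right _ _
  have hN4 : 4 ≤ N := by
    have h1 : 1 * 2 ≤ (d - 1) * ℓ := Nat.mul_le_mul (by omega) hl
    rw [hN]
    omega
  set m := n * (d - 1) with hm
  by_cases hc1 : N ∣ m
  · right
    exact arith3 hd hl hN (one_dvd _) (one_dvd _) (by rw [Nat.div_one]; exact hc1)
  by_cases hc2 : N ∣ 2 * m
  · exact arith2 hd hl hN hc2 hc1
  right
  have hNpos : 0 < N := by omega
  set G := Nat.gcd N m with hG
  have hGpos : 0 < G := Nat.gcd_pos_of_pos_left _ hNpos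
  set r := N / G with hr
  have hGN : G ∣ N := Nat.gcd_dvd_left _ _
  have hGm : G ∣ m := Nat.gcd_dvd_right _ _
  have hrG : r * G = N := Nat.div_mul_cancel hGN
  have hrpos : 0 < r := by
    rcases Nat.eq_zero_or_pos r with h | h
    · rw [h, Nat.zero_mul] at hrG
      omega
    · exact h
  have hr3 : 3 ≤ r := by
    rcases (by omega : r = 1 ∨ r = 2 ∨ 3 ≤ r) with h | h | h
    · exfalso
      apply hc1
      rw [h, Nat.one_mul] at hrG
      rw [hrG] at hGm
      exact hGm
    · exfalso
      apply hc2
      rw [h] at hrG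
      rw [← hrG]
      exact mul_dvd_mul_left 2 hGm
    · exact h
  have hdvd_imp : ∀ j : ℕ, N ∣ j * m → r ∣ j := by
    intro j hj
    have hcop : Nat.Coprime r (m / G) := Nat.coprime_div_gcd_div_gcd hGpos
    have hmG : (m / G) * G = m := Nat.div_mul_cancel hGm
    have h1 : (r * G) ∣ (j * (m / G)) * G := by
      rw [show (j * (m / G)) * G = j * m from by rw [mul_assoc, hmG], hrG]
      exact hj
    have h1' : r * G ∣ (j * (m / G)) * G := h1
    have h2 : r ∣ j * (m / G) := (Nat.mul_dvd_mul_iff_right hGpos).mp h1'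
    exact hcop.dvd_of_dvd_mul_right h2
  -- half and its cast
  set half := N / 2 with hhalf
  have hfin : T.Finite := Set.toFinite T
  have hmemT : ∀ p, p ∈ hfin.toFinset ↔ p ∈ T := fun p => Set.Finite.mem_toFinset hfin
  have hclosed : ∀ p ∈ hfin.toFinset, rot N m p ∈ hfin.toFinset := by
    intro p hp
    rw [hmemT] at hp ⊢
    rw [← hrot]
    exact Set.mem_image_of_mem _ hp
  have hfree : ∀ p ∈ hfin.toFinset, ∀ j, 0 < j → j < r → (rot N m)^[j] p ≠ p := by
    intro p hp j hj1 hj2 heq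
    rw [rot_iterate] at heq
    rw [hmemT] at hp
    obtain ⟨x, y, hpxy, hlt, hd2, hdN2, hdvdd⟩ := isDiag_rep hN2' (hT.1 p hp)
    rw [hpxy, rot_s, Sym2.eq_iff] at heq
    rcases heq with ⟨h1, _⟩ | ⟨h1, h2⟩
    · have hz : ((j * m : ℕ) : ZMod N) = 0 := sub_eq_self.mp h1
      have hjm : N ∣ j * m := (ZMod.natCast_eq_zero_iff _ _).mp hz
      have := Nat.le_of_dvd hj1 (hdvd_imp j hjm)
      omega
    · -- swap case: p is a diameter; derive crossing contradiction
      have hNjm : ¬ N ∣ j * m := by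
        intro hcon
        have hz : ((j * m : ℕ) : ZMod N) = 0 := (ZMod.natCast_eq_zero_iff _ _).mpr hcon
        rw [hz, sub_zero] at h1
        rw [h1] at hlt
        omega
      have h2jm : N ∣ 2 * (j * m) := by
        have hcm : ((j * m : ℕ) : ZMod N) = x - y := by rw [← h1]; ring
        have hcm2 : ((j * m : ℕ) : ZMod N) = y - x := by rw [← h2]; ring
        have : ((2 * (j * m) : ℕ) : ZMod N) = 0 := by
          have e : ((2 * (j * m) : ℕ) : ZMod N) = ((j * m : ℕ) : ZMod N) + ((j * m : ℕ) : ZMod N) := by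
            push_cast
            ring
          rw [e]
          nth_rewrite 1 [hcm]
          rw [hcm2]
          ring
        exact (ZMod.natCast_eq_zero_iff _ _).mp this
      obtain ⟨q2, hq2⟩ := h2jm
      obtain ⟨w, hw⟩ : ∃ w, q2 = 2 * w + 1 := by
        rcases Nat.even_or_odd q2 with ⟨w, hww⟩ | ⟨w, hww⟩
        · exfalso
          apply hNjm
          refine ⟨w, ?_⟩
          have he2 : N * q2 = 2 * (N * w) := by rw [hww]; ring
          omega
        · exact ⟨w, by omega⟩
      have he3 : N * q2 = 2 * (N * w) + N := by rw [hw]; ring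
      have hNeven : 2 ∣ N := by omega
      have hjmval : j * m = N * w + half := by omega
      have hmodeq : (j * m) % N = half % N := by
        rw [hjmval, Nat.mul_add_mod]
      have hcast : ((j * m : ℕ) : ZMod N) = ((half : ℕ) : ZMod N) :=
        (ZMod.natCast_eq_natCast_iff _ _ _).mpr hmodeq
      have hhalfval : ((half : ℕ) : ZMod N).val = half := ZMod.val_cast_of_lt (by omega)
      have hhalfzero : ((half : ℕ) : ZMod N) + ((half : ℕ) : ZMod N) = 0 := by
        rw [← Nat.cast_add, show half + half = N from by omega, ZMod.natCast_self]
      have hneghalf : -((half : ℕ) : ZMod N) = ((half : ℕ) : ZMod N) :=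
        neg_eq_of_add_eq_zero_left hhalfzero
      -- y - x = cast half
      have hyx : y - x = ((half : ℕ) : ZMod N) := by
        rw [← h1, hcast]
        rw [show x - ((half : ℕ) : ZMod N) - x = -((half : ℕ) : ZMod N) from by ring, hneghalf]
      -- the rotated diagonal
      set m' : ZMod N := ((m : ℕ) : ZMod N) with hm'
      have hp'T : rot N m p ∈ T := by
        rw [← hrot]
        exact Set.mem_image_of_mem _ hp
      rw [hpxy, rot_s] at hp'T
      set z : ZMod N := x - m' with hz
      set wz : ZMod N := y - m' with hwz
      have hm'ne : m' ≠ 0 := by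
        intro hcon
        exact hc1 ((ZMod.natCast_eq_zero_iff _ _).mp hcon)
      have hwzz : wz - z = ((half : ℕ) : ZMod N) := by
        rw [hwz, hz, show y - m' - (x - m') = y - x from by ring, hyx]
      -- C = val (z - x) = val (-m')
      set C := (z - x).val with hC
      have hCpos : 0 < C := by
        rcases Nat.eq_zero_or_pos C with h | h
        · exfalso
          have hvz : (z - x).val = 0 := by rw [← hC]; omega
          have this : z - x = 0 := (ZMod.val_eq_zero (z - x)).mp hvz
          rw [hz] at this
          have hmz : m' = 0 := by
            have : x - m' - x = 0 := this
            rwa [show x - m' - x = -m' from by ring, neg_eq_zero] at this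
          exact hm'ne hmz
        · exact h
      have hCne : C ≠ half := by
        intro hcon
        have hvv : (z - x).val = ((half : ℕ) : ZMod N).val := by rw [← hC, hcon, hhalfval]
        have hzx : z - x = ((half : ℕ) : ZMod N) := val_eq_val_iff.mp hvv
        rw [hz, show x - m' - x = -m' from by ring] at hzx
        apply hc2
        have : ((2 * m : ℕ) : ZMod N) = 0 := by
          push_cast
          rw [two_mul]
          have hmeq : (m : ZMod N) = -((half : ℕ) : ZMod N) := by
            rw [← hzx]; ring
          rw [hmeq, hneghalf]
          exact hhalfzero
        exact (ZMod.natCast_eq_zero_iff _ _).mp this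
      have hCN : C < N := val_lt' _
      -- E = val (wz - x) = (C + half) % N
      have hwzx : wz - x = (z - x) + ((half : ℕ) : ZMod N) := by
        rw [← hwzz]; ring
      have hE : (wz - x).val = (C + half) % N := by
        rw [hwzx, ZMod.val_add, hhalfval, hC]
      -- B = val (y - x) = half
      have hB : (y - x).val = half := by rw [hyx, hhalfval]
      have hcross : Crosses N s(x, y) s(z, wz) := by
        rw [crosses_iff, hB]
        rcases lt_or_gt_of_ne hCne with hlt2 | hgt2
        · left
          have hEeq : (wz - x).val = C + half := by
            rw [hE, Nat.mod_eq_of_lt (by omega)]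
          rw [hEeq, ← hC]
          omega
        · right
          have hEeq : (wz - x).val = C + half - N := by
            rw [hE, Nat.mod_eq_sub_mod (by omega), Nat.mod_eq_of_lt (by omega)]
          rw [hEeq, ← hC]
          omega
      exact hT.2.1 p hp (rot N m p) (by rw [← hrot]; exact Set.mem_image_of_mem _ hp)
        (by rw [hpxy, rot_s]; exact hcross)
  -- the iterate r is the identity
  have hgr : ∀ p : Sym2 (ZMod N), (rot N m)^[r] p = p := by
    intro p
    rw [rot_iterate]
    have hNrm : N ∣ r * m := by
      obtain ⟨u, hu⟩ := hGm
      exact ⟨u, by rw [← hrG, hu]; ring⟩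
    rw [rot_dvd_id hNrm]
    rfl
  have hdvdcard := card_dvd_of_free (rot N m) (rot_injective m) r hrpos hgr
    hfin.toFinset.card hfin.toFinset rfl hclosed hfree
  have hcardT : hfin.toFinset.card = ℓ - 1 := by
    rw [← Set.ncard_eq_toFinset_card _ hfin]
    exact angulation_ncard hd hl hN hT
  rw [hcardT] at hdvdcard
  have hNr : N / r = G := by
    rw [← hrG, Nat.mul_div_cancel_left _ hrpos]
  exact arith3 hd hl hN hdvdcard ⟨G, hrG.symm⟩ (by rw [hNr]; exact hGm)

end Necessity
section Constructions
variable {d ℓ N : ℕ} [NeZero N]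

lemma cast_add_sub_cast (u v : ℕ) :
    ((u + v : ℕ) : ZMod N) - ((u : ℕ) : ZMod N) = ((v : ℕ) : ZMod N) := by
  push_cast
  ring

lemma val_cast_cases {u : ℕ} (hu : u ≤ N) :
    (((u : ℕ) : ZMod N).val = u ∧ u < N) ∨ (((u : ℕ) : ZMod N).val = 0 ∧ u = N) := by
  rcases lt_or_eq_of_le hu with h | h
  · exact Or.inl ⟨ZMod.val_cast_of_lt h, h⟩
  · refine Or.inr ⟨?_, h⟩
    rw [h, ZMod.natCast_self, ZMod.val_zero]

lemma rot_image_mul {T : Set (Sym2 (ZMod N))} {u : ℕ} (h : rot N u '' T = T) :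
    ∀ s : ℕ, rot N (s * u) '' T = T := by
  intro s
  induction s with
  | zero =>
    rw [Nat.zero_mul, rot_dvd_id (Nat.dvd_zero N), Set.image_id]
  | succ s ih =>
    have hcomp : rot N ((s + 1) * u) = rot N (s * u) ∘ rot N u := by
      funext p
      rw [Function.comp_apply, rot_rot]
      congr 1
      ring
    rw [hcomp, Set.image_comp, h, ih]

def fanChord (N q d : ℕ) (kj : ℕ × ℕ) : Sym2 (ZMod N) :=
  s(((kj.1 * q : ℕ) : ZMod N), ((kj.1 * q + (1 + (kj.2 + 1) * (d - 1)) : ℕ) : ZMod N))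

lemma fanChord_mk (q : ℕ) (k j : ℕ) : fanChord N q d (k, j) =
    s(((k * q : ℕ) : ZMod N), ((k * q + (1 + (j + 1) * (d - 1)) : ℕ) : ZMod N)) := rfl

theorem multiFan (hd : 2 ≤ d) (hl : 2 ≤ ℓ) (hN : N = (d - 1) * ℓ + 2)
    {r : ℕ} (hrpos : 0 < r) (hrN : r ∣ N) (hrd : r ∣ d + 1) (hrl : r ∣ ℓ - 1) :
    ∃ T : Set (Sym2 (ZMod N)), IsAngulation d N T ∧
      ∀ k : ℕ, (N / r) ∣ k → rot N k '' T = T := by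
  have hN4 : 4 ≤ N := by
    have h1 : 1 * 2 ≤ (d - 1) * ℓ := Nat.mul_le_mul (by omega) hl
    rw [hN]; omega
  have hkey := key_identity hd hl hN
  set q := N / r with hqdef
  have hq : r * q = N := Nat.mul_div_cancel' hrN
  set b := (ℓ - 1) / r with hbdef
  have hb : r * b = ℓ - 1 := Nat.mul_div_cancel' hrl
  set Bmax := 1 + b * (d - 1) with hBmaxdef
  have hrb : r * (b * (d - 1)) = (d - 1) * (ℓ - 1) := by
    rw [← mul_assoc, hb, mul_comm]
  have hrBmax : r * Bmax = r + (d - 1) * (ℓ - 1) := by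
    rw [hBmaxdef, Nat.mul_add, Nat.mul_one, hrb]
  have hrled : r ≤ d + 1 := Nat.le_of_dvd (by omega) hrd
  have hBq : Bmax ≤ q := by
    have h1 : r * Bmax ≤ r * q := by omega
    exact Nat.le_of_mul_le_mul_left h1 hrpos
  have hbpos : 1 ≤ b := by
    rcases Nat.eq_zero_or_pos b with h | h
    · rw [h, Nat.mul_zero] at hb
      omega
    · exact h
  have hble : b ≤ ℓ - 1 := by
    have h1 : 1 * b ≤ r * b := Nat.mul_le_mul_right b hrpos
    omega
  have hBmaxN : Bmax + d ≤ N := by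
    have h1 : b * (d - 1) ≤ (ℓ - 1) * (d - 1) := Nat.mul_le_mul_right _ hble
    have h2 : (ℓ - 1) * (d - 1) = (d - 1) * (ℓ - 1) := Nat.mul_comm _ _
    omega
  have hqpos : 2 ≤ q := by
    have hd1 : d - 1 ≤ b * (d - 1) := Nat.le_mul_of_pos_left _ hbpos
    omega
  have hr1q : (r - 1) * q + q = r * q := by
    have h9 : (r - 1) + 1 = r := by omega
    calc (r - 1) * q + q = ((r - 1) + 1) * q := by ring
      _ = r * q := by rw [h9]
  set I : Finset (ℕ × ℕ) := Finset.range r ×ˢ Finset.range b with hI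
  set Tf : Finset (Sym2 (ZMod N)) := I.image (fanChord N q d) with hTf
  have hmemI : ∀ kj : ℕ × ℕ, kj ∈ I ↔ kj.1 < r ∧ kj.2 < b := by
    intro kj
    rw [hI, Finset.mem_product, Finset.mem_range, Finset.mem_range]
  have hcfacts : ∀ j : ℕ, j < b →
      2 ≤ 1 + (j + 1) * (d - 1) ∧ 1 + (j + 1) * (d - 1) ≤ Bmax := by
    intro j hj
    have h1 : 1 * (d - 1) ≤ (j + 1) * (d - 1) := Nat.mul_le_mul_right _ (by omega)
    have h2 : (j + 1) * (d - 1) ≤ b * (d - 1) := Nat.mul_le_mul_right _ (by omega)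
    omega
  have hkfacts : ∀ k : ℕ, k < r → k * q ≤ (r - 1) * q := by
    intro k hk
    exact Nat.mul_le_mul_right _ (by omega)
  have hkq0 : ∀ k : ℕ, k = 0 ∨ q ≤ k * q := by
    intro k
    rcases Nat.eq_zero_or_pos k with h | h
    · exact Or.inl h
    · exact Or.inr (Nat.le_mul_of_pos_left _ h)
  have hkq1 : ∀ k : ℕ, k ≤ 1 ∨ 2 * q ≤ k * q := by
    intro k
    rcases le_or_gt k 1 with h | h
    · exact Or.inl h
    · exact Or.inr (Nat.mul_le_mul_right _ h)
  have hr3q : r ≤ 2 ∨ 3 * q ≤ r * q := by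
    rcases le_or_gt r 2 with h | h
    · exact Or.inl h
    · exact Or.inr (Nat.mul_le_mul_right _ h)
  have hBmaxq : Bmax = q → r = d + 1 := by
    intro hcon
    have h9 : r * Bmax = r * q := by rw [hcon]
    omega
  -- diagonality
  have hdiag : ∀ kj : ℕ × ℕ, kj ∈ I → IsDiag d N (fanChord N q d kj) := by
    rintro ⟨k, j⟩ hkj
    rw [hmemI] at hkj
    obtain ⟨hk, hj⟩ := hkj
    obtain ⟨hc2, hcB⟩ := hcfacts j hj
    rw [fanChord_mk]
    have hcN : 1 + (j + 1) * (d - 1) < N := by omega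
    refine ⟨_, _, rfl, ?_, ?_, ?_⟩ <;>
      rw [cast_add_sub_cast, ZMod.val_cast_of_lt hcN]
    · omega
    · omega
    · have hcm : (j + 1) * (d - 1) = (d - 1) * (j + 1) := Nat.mul_comm _ _
      exact ⟨j + 1, by omega⟩
  -- apex difference
  have hcast_q : ∀ k k' : ℕ, k < r → k' < r → k ≠ k' → ∃ D : ℕ, q ≤ D ∧ D ≤ (r - 1) * q ∧
      ((k' * q : ℕ) : ZMod N) - ((k * q : ℕ) : ZMod N) = ((D : ℕ) : ZMod N) := by
    intro k k' hk hk' hne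
    rcases lt_or_gt_of_ne hne with hlt | hgt
    · refine ⟨(k' - k) * q, ?_, Nat.mul_le_mul_right _ (by omega), ?_⟩
      · have h9 : 1 * q ≤ (k' - k) * q := Nat.mul_le_mul_right _ (by omega)
        omega
      · have hle : k * q ≤ k' * q := Nat.mul_le_mul_right _ (by omega)
        rw [← Nat.cast_sub hle, Nat.sub_mul]
    · refine ⟨(k' + r - k) * q, ?_, Nat.mul_le_mul_right _ (by omega), ?_⟩
      · have h9 : 1 * q ≤ (k' + r - k) * q := Nat.mul_le_mul_right _ (by omega)
        omega
      · have hsum : k * q + (r - k) * q = r * q := by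
          have h9 : (k + (r - k)) = r := by omega
          calc k * q + (r - k) * q = (k + (r - k)) * q := by ring
            _ = r * q := by rw [h9]
        have h0 : ((k * q : ℕ) : ZMod N) + (((r - k) * q : ℕ) : ZMod N) = 0 := by
          rw [← Nat.cast_add, hsum, hq, ZMod.natCast_self]
        have hneg : -((k * q : ℕ) : ZMod N) = (((r - k) * q : ℕ) : ZMod N) :=
          neg_eq_of_add_eq_zero_right h0
        have hsum2 : k' * q + (r - k) * q = (k' + r - k) * q := by
          have h9 : (k' + (r - k)) = k' + r - k := by omega
          calc k' * q + (r - k) * q = (k' + (r - k)) * q := by ring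
            _ = (k' + r - k) * q := by rw [h9]
        rw [sub_eq_add_neg, hneg, ← Nat.cast_add, hsum2]
  -- non-crossing
  have hnc : ∀ p ∈ Tf, ∀ p' ∈ Tf, ¬ Crosses N p p' := by
    intro p hp p' hp'
    rw [hTf, Finset.mem_image] at hp hp'
    obtain ⟨⟨k, j⟩, hkj, rfl⟩ := hp
    obtain ⟨⟨k', j'⟩, hkj', rfl⟩ := hp'
    rw [hmemI] at hkj hkj'
    obtain ⟨hk, hj⟩ := hkj
    obtain ⟨hk', hj'⟩ := hkj'
    obtain ⟨hc2, hcB⟩ := hcfacts j hj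
    obtain ⟨hc2', hcB'⟩ := hcfacts j' hj'
    rw [fanChord_mk, fanChord_mk, crosses_iff]
    have hBsub : ((k * q + (1 + (j + 1) * (d - 1)) : ℕ) : ZMod N) - ((k * q : ℕ) : ZMod N)
        = ((1 + (j + 1) * (d - 1) : ℕ) : ZMod N) := cast_add_sub_cast _ _
    have hBval : ((1 + (j + 1) * (d - 1) : ℕ) : ZMod N).val = 1 + (j + 1) * (d - 1) :=
      ZMod.val_cast_of_lt (by omega)
    by_cases hkk : k = k'
    · subst hkk
      have hCC : (((k * q : ℕ) : ZMod N) - ((k * q : ℕ) : ZMod N)).val = 0 := by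
        rw [sub_self, ZMod.val_zero]
      rintro (⟨h1, _, _⟩ | ⟨_, _, h3⟩)
      · rw [hCC] at h1
        omega
      · rw [hCC] at h3
        omega
    · obtain ⟨D, hDq, hDr, hDcast⟩ := hcast_q k k' hk hk' hkk
      have hDN : D < N := by omega
      have hDval : ((D : ℕ) : ZMod N).val = D := ZMod.val_cast_of_lt hDN
      have hEcast : ((k' * q + (1 + (j' + 1) * (d - 1)) : ℕ) : ZMod N) - ((k * q : ℕ) : ZMod N)
          = ((D + (1 + (j' + 1) * (d - 1)) : ℕ) : ZMod N) := by
        have h2 : ((k' * q + (1 + (j' + 1) * (d - 1)) : ℕ) : ZMod N) - ((k * q : ℕ) : ZMod N)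
            = (((k' * q : ℕ) : ZMod N) - ((k * q : ℕ) : ZMod N))
              + ((1 + (j' + 1) * (d - 1) : ℕ) : ZMod N) := by
          push_cast
          ring
        rw [h2, hDcast, ← Nat.cast_add]
      have hDc'N : D + (1 + (j' + 1) * (d - 1)) ≤ N := by omega
      rintro (⟨h1, h2, h3⟩ | ⟨h1, h2, h3⟩)
      · rw [hDcast, hDval] at h2
        rw [hBsub, hBval] at h2
        omega
      · rw [hEcast] at h1 h2
        rw [hBsub, hBval] at h2
        rcases val_cast_cases hDc'N with ⟨hv, _⟩ | ⟨hv, _⟩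
        · rw [hv] at h2
          omega
        · rw [hv] at h1
          omega
  -- injectivity and cardinality
  have hinj : Set.InjOn (fanChord N q d) ↑I := by
    rintro ⟨k, j⟩ hkj ⟨k', j'⟩ hkj' heq
    rw [Finset.mem_coe, hmemI] at hkj hkj'
    obtain ⟨hk, hj⟩ := hkj
    obtain ⟨hk', hj'⟩ := hkj'
    obtain ⟨hc2, hcB⟩ := hcfacts j hj
    obtain ⟨hc2', hcB'⟩ := hcfacts j' hj'
    have hkr := hkfacts k hk
    have hkr' := hkfacts k' hk'
    have hkqN : k * q + (1 + (j + 1) * (d - 1)) ≤ N := by omega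
    have hkqN' : k' * q + (1 + (j' + 1) * (d - 1)) ≤ N := by omega
    have hv1 : ((k * q : ℕ) : ZMod N).val = k * q := ZMod.val_cast_of_lt (by omega)
    have hv1' : ((k' * q : ℕ) : ZMod N).val = k' * q := ZMod.val_cast_of_lt (by omega)
    rw [fanChord_mk, fanChord_mk, Sym2.eq_iff] at heq
    have hk0 := hkq0 k
    have hk0' := hkq0 k'
    have hk1 := hkq1 k
    have hk1' := hkq1 k'
    rcases heq with ⟨e1, e2⟩ | ⟨e1, e2⟩
    · have hkk : k * q = k' * q := by
        have h9 := congrArg ZMod.val e1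
        rwa [hv1, hv1'] at h9
      have hkeq : k = k' := Nat.eq_of_mul_eq_mul_right (by omega) hkk
      have hcc : 1 + (j + 1) * (d - 1) = 1 + (j' + 1) * (d - 1) := by
        have h9 := congrArg ZMod.val e2
        rcases val_cast_cases hkqN with ⟨hva, _⟩ | ⟨hva, hva2⟩ <;>
          rcases val_cast_cases hkqN' with ⟨hvb, _⟩ | ⟨hvb, hvb2⟩ <;>
          rw [hva, hvb] at h9 <;> omega
      have hjj : j = j' := by
        have h8 : (j + 1) * (d - 1) = (j' + 1) * (d - 1) := by omega
        have h9 := Nat.eq_of_mul_eq_mul_right (show 0 < d - 1 by omega) h8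
        omega
      exact Prod.ext hkeq hjj
    · exfalso
      have hv_e1 := congrArg ZMod.val e1
      have hv_e2 := congrArg ZMod.val e2
      rw [hv1] at hv_e1
      rw [hv1'] at hv_e2
      rcases val_cast_cases hkqN' with ⟨hv, hlt⟩ | ⟨hv, heqN⟩ <;>
        rcases val_cast_cases hkqN with ⟨hv2, hlt2⟩ | ⟨hv2, heqN2⟩ <;>
        rw [hv] at hv_e1 <;> rw [hv2] at hv_e2
      · omega
      · -- k' * q + c' < N, k * q + c = N
        have hk'0 : k' = 0 := by omega
        have hBqeq : Bmax = q := by omega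
        have := hBmaxq hBqeq
        omega
      · -- k' * q + c' = N, k * q + c < N : k = 0, c = k' * q
        have hk00 : k = 0 := by omega
        have hBqeq : Bmax = q := by omega
        have := hBmaxq hBqeq
        omega
      · omega
  have hcard : Tf.card = ℓ - 1 := by
    rw [hTf, Finset.card_image_of_injOn hinj, hI, Finset.card_product,
      Finset.card_range, Finset.card_range]
    omega
  -- rotation by q
  have hrot1 : ∀ k j : ℕ, 1 ≤ k → rot N q (fanChord N q d (k, j)) = fanChord N q d (k - 1, j) := by
    intro k j hk1
    rw [fanChord_mk, fanChord_mk, rot_s]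
    have hle : q ≤ k * q := Nat.le_mul_of_pos_left _ (by omega)
    have hsub1 : (k - 1) * q = k * q - q := by rw [Nat.sub_mul, one_mul]
    have e1 : ((k * q : ℕ) : ZMod N) - ((q : ℕ) : ZMod N) = (((k - 1) * q : ℕ) : ZMod N) := by
      rw [hsub1, Nat.cast_sub hle]
    have e2 : ((k * q + (1 + (j + 1) * (d - 1)) : ℕ) : ZMod N) - ((q : ℕ) : ZMod N)
        = (((k - 1) * q + (1 + (j + 1) * (d - 1)) : ℕ) : ZMod N) := by
      have hle2 : q ≤ k * q + (1 + (j + 1) * (d - 1)) := by omega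
      rw [← Nat.cast_sub hle2]
      congr 1
      omega
    rw [e1, e2]
  have hrot0 : ∀ j : ℕ, rot N q (fanChord N q d (0, j)) = fanChord N q d (r - 1, j) := by
    intro j
    rw [fanChord_mk, fanChord_mk, rot_s]
    have hsum : (r - 1) * q + q = r * q := hr1q
    have h0 : (((r - 1) * q : ℕ) : ZMod N) + ((q : ℕ) : ZMod N) = 0 := by
      rw [← Nat.cast_add, hsum, hq, ZMod.natCast_self]
    have hneg : -((q : ℕ) : ZMod N) = (((r - 1) * q : ℕ) : ZMod N) :=
      neg_eq_of_add_eq_zero_left h0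
    have e1 : ((0 * q : ℕ) : ZMod N) - ((q : ℕ) : ZMod N) = (((r - 1) * q : ℕ) : ZMod N) := by
      rw [Nat.zero_mul, Nat.cast_zero, zero_sub, hneg]
    have e2 : ((0 * q + (1 + (j + 1) * (d - 1)) : ℕ) : ZMod N) - ((q : ℕ) : ZMod N)
        = (((r - 1) * q + (1 + (j + 1) * (d - 1)) : ℕ) : ZMod N) := by
      rw [Nat.zero_mul, Nat.zero_add, sub_eq_add_neg, hneg, ← Nat.cast_add]
      congr 1
      omega
    rw [e1, e2]
  have hrotq : rot N q '' ↑Tf = ↑Tf := by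
    apply Set.Subset.antisymm
    · rintro p ⟨p₀, hp₀, rfl⟩
      rw [Finset.mem_coe, hTf, Finset.mem_image] at hp₀
      obtain ⟨⟨k, j⟩, hkj, rfl⟩ := hp₀
      rw [hmemI] at hkj
      obtain ⟨hk, hj⟩ := hkj
      rw [Finset.mem_coe, hTf, Finset.mem_image]
      rcases Nat.eq_zero_or_pos k with hk0 | hk0
      · subst hk0
        exact ⟨(r - 1, j), by rw [hmemI]; exact ⟨by omega, hj⟩, (hrot0 j).symm⟩
      · exact ⟨(k - 1, j), by rw [hmemI]; exact ⟨by omega, hj⟩, (hrot1 k j hk0).symm⟩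
    · intro p hp
      rw [Finset.mem_coe, hTf, Finset.mem_image] at hp
      obtain ⟨⟨k, j⟩, hkj, rfl⟩ := hp
      rw [hmemI] at hkj
      obtain ⟨hk, hj⟩ := hkj
      rcases (by omega : k + 1 < r ∨ k = r - 1) with hk1 | hk1
      · refine ⟨fanChord N q d (k + 1, j), ?_, ?_⟩
        · rw [Finset.mem_coe, hTf, Finset.mem_image]
          exact ⟨(k + 1, j), by rw [hmemI]; exact ⟨hk1, hj⟩, rfl⟩
        · rw [hrot1 (k + 1) j (by omega)]
          congr 2
      · refine ⟨fanChord N q d (0, j), ?_, ?_⟩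
        · rw [Finset.mem_coe, hTf, Finset.mem_image]
          exact ⟨(0, j), by rw [hmemI]; exact ⟨by omega, hj⟩, rfl⟩
        · rw [hrot0 j, hk1]
  -- assemble
  refine ⟨↑Tf, ?_, ?_⟩
  · apply isAngulation_of_card hd hl hN
    · intro p hp
      rw [Finset.mem_coe, hTf, Finset.mem_image] at hp
      obtain ⟨kj, hkj, rfl⟩ := hp
      exact hdiag kj hkj
    · intro p hp p' hp'
      exact hnc p hp p' hp'
    · rw [Set.ncard_coe_finset, hcard]
  · intro k hkdvd
    obtain ⟨s, hs⟩ := hkdvd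
    rw [hs, mul_comm]
    exact rot_image_mul hrotq s
end Constructions
section DoubleFan
variable {d ℓ N : ℕ} [NeZero N]

theorem doubleFan (hd : 2 ≤ d) (hl : 2 ≤ ℓ) (hN : N = (d - 1) * ℓ + 2)
    (hdeven : 2 ∣ d) (hNeven : 2 ∣ N) :
    ∃ T : Set (Sym2 (ZMod N)), IsAngulation d N T ∧ rot N (N / 2) '' T = T := by
  have hN4 : 4 ≤ N := by
    have h1 : 1 * 2 ≤ (d - 1) * ℓ := Nat.mul_le_mul (by omega) hl
    rw [hN]; omega
  set half := N / 2 with hhalfdef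
  have hhalf : half + half = N := by omega
  have hdl2 : (d - 1) * ℓ = N - 2 := by rw [hN]; omega
  have hleven : 2 ∣ ℓ := by
    have h2 : 2 ∣ (d - 1) * ℓ := by omega
    rcases (Nat.Prime.dvd_mul Nat.prime_two).mp h2 with h | h
    · omega
    · exact h
  set L := ℓ / 2 with hLdef
  have hL : 2 * L = ℓ := Nat.mul_div_cancel' hleven
  have hLpos : 1 ≤ L := by omega
  have hmulc : (d - 1) * (2 * L) = 2 * (L * (d - 1)) := by ring
  have hhalfval : half = L * (d - 1) + 1 := by
    have h9 : (d - 1) * ℓ = 2 * (L * (d - 1)) := by rw [← hL]; exact hmulc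
    omega
  have hhalfN : half + 2 ≤ N := by omega
  have hcfacts : ∀ j : ℕ, j < L →
      2 ≤ 1 + (j + 1) * (d - 1) ∧ 1 + (j + 1) * (d - 1) ≤ half := by
    intro j hj
    have h1 : 1 * (d - 1) ≤ (j + 1) * (d - 1) := Nat.mul_le_mul_right _ (by omega)
    have h2 : (j + 1) * (d - 1) ≤ L * (d - 1) := Nat.mul_le_mul_right _ (by omega)
    omega
  have hcfacts' : ∀ j : ℕ, j < L - 1 → 1 + (j + 1) * (d - 1) + (d - 1) ≤ half := by
    intro j hj
    have h2 : (j + 2) * (d - 1) ≤ L * (d - 1) := Nat.mul_le_mul_right _ (by omega)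
    have h3 : (j + 2) * (d - 1) = (j + 1) * (d - 1) + (d - 1) := by ring
    omega
  have hclast : 1 + ((L - 1) + 1) * (d - 1) = half := by
    have h9 : (L - 1) + 1 = L := by omega
    rw [h9]
    omega
  set Tf : Finset (Sym2 (ZMod N)) :=
    (Finset.range L).image (fun j => fanChord N half d (0, j)) ∪
    (Finset.range (L - 1)).image (fun j => fanChord N half d (1, j)) with hTf
  have h0h : (0 : ℕ) * half = 0 := Nat.zero_mul _
  have h1h : (1 : ℕ) * half = half := Nat.one_mul _
  have hA : ∀ j : ℕ, fanChord N half d (0, j) =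
      s((0 : ZMod N), ((1 + (j + 1) * (d - 1) : ℕ) : ZMod N)) := by
    intro j
    rw [fanChord_mk, h0h]
    norm_num
  have hB : ∀ j : ℕ, fanChord N half d (1, j) =
      s(((half : ℕ) : ZMod N), ((half + (1 + (j + 1) * (d - 1)) : ℕ) : ZMod N)) := by
    intro j
    rw [fanChord_mk, h1h]
  have hhalfcast0 : ((half : ℕ) : ZMod N) + ((half : ℕ) : ZMod N) = 0 := by
    rw [← Nat.cast_add, hhalf, ZMod.natCast_self]
  have hneghalf : -((half : ℕ) : ZMod N) = ((half : ℕ) : ZMod N) :=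
    neg_eq_of_add_eq_zero_left hhalfcast0
  have hvhalf : ((half : ℕ) : ZMod N).val = half := ZMod.val_cast_of_lt (by omega)
  -- diagonality
  have hdiagA : ∀ j : ℕ, j < L → IsDiag d N (fanChord N half d (0, j)) := by
    intro j hj
    obtain ⟨hc2, hcH⟩ := hcfacts j hj
    rw [hA]
    refine ⟨_, _, rfl, ?_, ?_, ?_⟩ <;>
      rw [sub_zero, ZMod.val_cast_of_lt (by omega)]
    · omega
    · omega
    · have hcm : (j + 1) * (d - 1) = (d - 1) * (j + 1) := Nat.mul_comm _ _
      exact ⟨j + 1, by omega⟩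
  have hdiagB : ∀ j : ℕ, j < L - 1 → IsDiag d N (fanChord N half d (1, j)) := by
    intro j hj
    have hcH := hcfacts' j hj
    have hc2 : 2 ≤ 1 + (j + 1) * (d - 1) := by
      have h1 : 1 * (d - 1) ≤ (j + 1) * (d - 1) := Nat.mul_le_mul_right _ (by omega)
      omega
    rw [hB]
    refine ⟨_, _, rfl, ?_, ?_, ?_⟩ <;>
      rw [cast_add_sub_cast, ZMod.val_cast_of_lt (by omega)]
    · omega
    · omega
    · have hcm : (j + 1) * (d - 1) = (d - 1) * (j + 1) := Nat.mul_comm _ _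
      exact ⟨j + 1, by omega⟩
  -- membership characterization
  have hmem : ∀ p : Sym2 (ZMod N), p ∈ Tf ↔
      (∃ j < L, p = fanChord N half d (0, j)) ∨
      (∃ j < L - 1, p = fanChord N half d (1, j)) := by
    intro p
    rw [hTf, Finset.mem_union, Finset.mem_image, Finset.mem_image]
    constructor
    · rintro (⟨j, hj, rfl⟩ | ⟨j, hj, rfl⟩)
      · exact Or.inl ⟨j, Finset.mem_range.mp hj, rfl⟩
      · exact Or.inr ⟨j, Finset.mem_range.mp hj, rfl⟩
    · rintro (⟨j, hj, rfl⟩ | ⟨j, hj, rfl⟩)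
      · exact Or.inl ⟨j, Finset.mem_range.mpr hj, rfl⟩
      · exact Or.inr ⟨j, Finset.mem_range.mpr hj, rfl⟩
  -- non-crossing
  have hnc : ∀ p ∈ Tf, ∀ p' ∈ Tf, ¬ Crosses N p p' := by
    intro p hp p' hp'
    rw [hmem] at hp hp'
    rcases hp with ⟨j, hj, rfl⟩ | ⟨j, hj, rfl⟩ <;>
      rcases hp' with ⟨j', hj', rfl⟩ | ⟨j', hj', rfl⟩
    · -- (0,0) same apex
      obtain ⟨hc2, hcH⟩ := hcfacts j hj
      rw [hA, hA, crosses_iff, sub_self, ZMod.val_zero]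
      rintro (⟨h1, _, _⟩ | ⟨_, _, h3⟩) <;> omega
    · -- (0 chord, half chord)
      obtain ⟨hc2, hcH⟩ := hcfacts j hj
      have hcH' := hcfacts' j' hj'
      have hc2' : 2 ≤ 1 + (j' + 1) * (d - 1) := by
        have h1 : 1 * (d - 1) ≤ (j' + 1) * (d - 1) := Nat.mul_le_mul_right _ (by omega)
        omega
      rw [hA, hB, crosses_iff]
      have e1 : (((half : ℕ) : ZMod N) - 0).val = half := by rw [sub_zero, hvhalf]
      have e2 : (((1 + (j + 1) * (d - 1) : ℕ) : ZMod N) - 0).val = 1 + (j + 1) * (d - 1) := by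
        rw [sub_zero, ZMod.val_cast_of_lt (by omega)]
      have e3 : (((half + (1 + (j' + 1) * (d - 1)) : ℕ) : ZMod N) - 0).val
          = half + (1 + (j' + 1) * (d - 1)) := by
        rw [sub_zero, ZMod.val_cast_of_lt (by omega)]
      rintro (⟨h1, h2, h3⟩ | ⟨h1, h2, h3⟩)
      · rw [e1] at h1 h2
        rw [e2] at h2
        omega
      · rw [e3] at h1 h2
        rw [e2] at h2
        rw [e1] at h3
        omega
    · -- (half chord, 0 chord)
      have hcH := hcfacts' j hj
      have hc2 : 2 ≤ 1 + (j + 1) * (d - 1) := by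
        have h1 : 1 * (d - 1) ≤ (j + 1) * (d - 1) := Nat.mul_le_mul_right _ (by omega)
        omega
      obtain ⟨hc2', hcH'⟩ := hcfacts j' hj'
      rw [hB, hA, crosses_iff]
      have eB : (((half + (1 + (j + 1) * (d - 1)) : ℕ) : ZMod N) - ((half : ℕ) : ZMod N)).val
          = 1 + (j + 1) * (d - 1) := by
        rw [cast_add_sub_cast, ZMod.val_cast_of_lt (by omega)]
      have eC : ((0 : ZMod N) - ((half : ℕ) : ZMod N)).val = half := by
        rw [zero_sub, hneghalf, hvhalf]
      have eEcast : (((1 + (j' + 1) * (d - 1) : ℕ) : ZMod N) - ((half : ℕ) : ZMod N))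
          = (((1 + (j' + 1) * (d - 1)) + half : ℕ) : ZMod N) := by
        rw [sub_eq_add_neg, hneghalf, ← Nat.cast_add]
      have hEle : (1 + (j' + 1) * (d - 1)) + half ≤ N := by omega
      rintro (⟨h1, h2, h3⟩ | ⟨h1, h2, h3⟩)
      · rw [eC] at h1 h2
        rw [eB] at h2
        omega
      · rw [eEcast] at h1 h2
        rw [eB] at h2
        rcases val_cast_cases hEle with ⟨hv, _⟩ | ⟨hv, _⟩
        · rw [hv] at h1 h2
          omega
        · rw [hv] at h1
          omega
    · -- (half, half) same apex
      have hcH := hcfacts' j hj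
      rw [hB, hB, crosses_iff, sub_self, ZMod.val_zero]
      rintro (⟨h1, _, _⟩ | ⟨_, _, h3⟩) <;> omega
  -- injectivity and card
  have hinjA : Set.InjOn (fun j => fanChord N half d (0, j)) ↑(Finset.range L) := by
    intro j hj j' hj' heq
    rw [Finset.coe_range, Set.mem_Iio] at hj hj'
    obtain ⟨hc2, hcH⟩ := hcfacts j hj
    obtain ⟨hc2', hcH'⟩ := hcfacts j' hj'
    simp only [hA] at heq
    rw [Sym2.eq_iff] at heq
    rcases heq with ⟨_, e2⟩ | ⟨e1, e2⟩
    · have h9 := congrArg ZMod.val e2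
      rw [ZMod.val_cast_of_lt (by omega), ZMod.val_cast_of_lt (by omega)] at h9
      have h8 : (j + 1) * (d - 1) = (j' + 1) * (d - 1) := by omega
      have := Nat.eq_of_mul_eq_mul_right (show 0 < d - 1 by omega) h8
      omega
    · exfalso
      have h9 := congrArg ZMod.val e1.symm
      rw [ZMod.val_cast_of_lt (by omega), ZMod.val_zero] at h9
      omega
  have hinjB : Set.InjOn (fun j => fanChord N half d (1, j)) ↑(Finset.range (L - 1)) := by
    intro j hj j' hj' heq
    rw [Finset.coe_range, Set.mem_Iio] at hj hj'
    have hcH := hcfacts' j hj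
    have hcH' := hcfacts' j' hj'
    simp only [hB] at heq
    rw [Sym2.eq_iff] at heq
    rcases heq with ⟨_, e2⟩ | ⟨e1, e2⟩
    · have h9 := congrArg ZMod.val e2
      rw [ZMod.val_cast_of_lt (by omega), ZMod.val_cast_of_lt (by omega)] at h9
      have h8 : (j + 1) * (d - 1) = (j' + 1) * (d - 1) := by omega
      have := Nat.eq_of_mul_eq_mul_right (show 0 < d - 1 by omega) h8
      omega
    · exfalso
      have h9 := congrArg ZMod.val e2
      rw [hvhalf, ZMod.val_cast_of_lt (by omega)] at h9
      have h1 : 1 * (d - 1) ≤ (j + 1) * (d - 1) := Nat.mul_le_mul_right _ (by omega)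
      omega
  have hdisj : Disjoint ((Finset.range L).image (fun j => fanChord N half d (0, j)))
      ((Finset.range (L - 1)).image (fun j => fanChord N half d (1, j))) := by
    rw [Finset.disjoint_left]
    intro p hp hp'
    rw [Finset.mem_image] at hp hp'
    obtain ⟨j, hj, rfl⟩ := hp
    obtain ⟨j', hj', heq⟩ := hp'
    rw [Finset.mem_range] at hj hj'
    obtain ⟨hc2, hcH⟩ := hcfacts j hj
    have hcH' := hcfacts' j' hj'
    have hc2' : 2 ≤ 1 + (j' + 1) * (d - 1) := by
      have h1 : 1 * (d - 1) ≤ (j' + 1) * (d - 1) := Nat.mul_le_mul_right _ (by omega)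
      omega
    rw [hA, hB, Sym2.eq_iff] at heq
    rcases heq with ⟨e1, _⟩ | ⟨_, e2⟩
    · have h9 := congrArg ZMod.val e1
      rw [hvhalf, ZMod.val_zero] at h9
      omega
    · have h9 := congrArg ZMod.val e2
      rw [ZMod.val_cast_of_lt (by omega), ZMod.val_zero] at h9
      omega
  have hcard : Tf.card = ℓ - 1 := by
    rw [hTf, Finset.card_union_of_disjoint hdisj,
      Finset.card_image_of_injOn hinjA, Finset.card_image_of_injOn hinjB,
      Finset.card_range, Finset.card_range]
    omega
  -- rotation
  have hrotA : ∀ j : ℕ, j < L - 1 →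
      rot N half (fanChord N half d (0, j)) = fanChord N half d (1, j) := by
    intro j hj
    rw [hA, hB, rot_s]
    have e1 : (0 : ZMod N) - ((half : ℕ) : ZMod N) = ((half : ℕ) : ZMod N) := by
      rw [zero_sub, hneghalf]
    have e2 : ((1 + (j + 1) * (d - 1) : ℕ) : ZMod N) - ((half : ℕ) : ZMod N)
        = ((half + (1 + (j + 1) * (d - 1)) : ℕ) : ZMod N) := by
      rw [sub_eq_add_neg, hneghalf, ← Nat.cast_add]
      congr 1
      omega
    rw [e1, e2]
  have hrotB : rot N half (fanChord N half d (0, L - 1)) = fanChord N half d (0, L - 1) := by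
    rw [hA, rot_s]
    have e1 : (0 : ZMod N) - ((half : ℕ) : ZMod N) = ((half : ℕ) : ZMod N) := by
      rw [zero_sub, hneghalf]
    have e2 : ((1 + ((L - 1) + 1) * (d - 1) : ℕ) : ZMod N) = ((half : ℕ) : ZMod N) := by
      rw [hclast]
    have e3 : ((1 + ((L - 1) + 1) * (d - 1) : ℕ) : ZMod N) - ((half : ℕ) : ZMod N)
        = (0 : ZMod N) := by
      rw [e2, sub_self]
    rw [e1, e3, e2, Sym2.eq_swap]
  have hrotC : ∀ j : ℕ, j < L - 1 →
      rot N half (fanChord N half d (1, j)) = fanChord N half d (0, j) := by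
    intro j hj
    rw [hA, hB, rot_s]
    have e1 : ((half : ℕ) : ZMod N) - ((half : ℕ) : ZMod N) = (0 : ZMod N) := sub_self _
    have e2 : ((half + (1 + (j + 1) * (d - 1)) : ℕ) : ZMod N) - ((half : ℕ) : ZMod N)
        = ((1 + (j + 1) * (d - 1) : ℕ) : ZMod N) := cast_add_sub_cast _ _
    rw [e1, e2]
  have hrotim : rot N half '' ↑Tf = ↑Tf := by
    apply Set.Subset.antisymm
    · rintro p ⟨p₀, hp₀, rfl⟩
      rw [Finset.mem_coe, hmem] at hp₀
      rw [Finset.mem_coe, hmem]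
      rcases hp₀ with ⟨j, hj, rfl⟩ | ⟨j, hj, rfl⟩
      · rcases (by omega : j < L - 1 ∨ j = L - 1) with hj1 | hj1
        · exact Or.inr ⟨j, hj1, hrotA j hj1⟩
        · subst hj1
          exact Or.inl ⟨L - 1, by omega, hrotB⟩
      · exact Or.inl ⟨j, by omega, hrotC j hj⟩
    · intro p hp
      rw [Finset.mem_coe, hmem] at hp
      rcases hp with ⟨j, hj, rfl⟩ | ⟨j, hj, rfl⟩
      · rcases (by omega : j < L - 1 ∨ j = L - 1) with hj1 | hj1
        · refine ⟨fanChord N half d (1, j), ?_, hrotC j hj1⟩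
          rw [Finset.mem_coe, hmem]
          exact Or.inr ⟨j, hj1, rfl⟩
        · subst hj1
          refine ⟨fanChord N half d (0, L - 1), ?_, hrotB⟩
          rw [Finset.mem_coe, hmem]
          exact Or.inl ⟨L - 1, by omega, rfl⟩
      · refine ⟨fanChord N half d (0, j), ?_, hrotA j hj⟩
        rw [Finset.mem_coe, hmem]
        exact Or.inl ⟨j, by omega, rfl⟩
  refine ⟨↑Tf, ?_, hrotim⟩
  apply isAngulation_of_card hd hl hN
  · intro p hp
    rw [Finset.mem_coe, hmem] at hp
    rcases hp with ⟨j, hj, rfl⟩ | ⟨j, hj, rfl⟩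
    · exact hdiagA j hj
    · exact hdiagB j hj
  · intro p hp p' hp'
    exact hnc p (Finset.mem_coe.mp hp) p' (Finset.mem_coe.mp hp')
  · rw [Set.ncard_coe_finset, hcard]

end DoubleFan

/-- For d >= 2, l >= 2, n >= 1, N = (d-1)l + 2 and t = gcd(d+1, 2(l-1)),
there exists a (d+1)-angulation T of the N-gon with rho^(n(d-1))(T) = T
iff N divides 2n or N divides t*n. -/
theorem invariant_angulation_iff (d ℓ n N : ℕ) (hd : 2 ≤ d) (hl : 2 ≤ ℓ) (hn : 1 ≤ n)
    (hN : N = (d - 1) * ℓ + 2) :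
    (∃ T : Set (Sym2 (ZMod N)), IsAngulation d N T ∧ rot N (n * (d - 1)) '' T = T) ↔
      (N ∣ 2 * n ∨ N ∣ Nat.gcd (d + 1) (2 * (ℓ - 1)) * n) := by
  have hN4 : 4 ≤ N := by
    have h1 : 1 * 2 ≤ (d - 1) * ℓ := Nat.mul_le_mul (by omega) hl
    rw [hN]; omega
  haveI : NeZero N := ⟨by omega⟩
  constructor
  · rintro ⟨T, hT, hrot⟩
    exact necessity hd hl hN hT hrot
  · intro hrhs
    by_cases hA : N ∣ n * (d - 1)
    · obtain ⟨T, hang, hinv⟩ := multiFan hd hl hN (r := 1) one_pos (one_dvd N)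
        (one_dvd _) (one_dvd _)
      exact ⟨T, hang, hinv _ (by rw [Nat.div_one]; exact hA)⟩
    rcases hrhs with h2n | htn
    · -- half-turn: double fan
      have hdeven : 2 ∣ d := by
        by_contra hdodd
        apply hA
        have hde : 2 ∣ d - 1 := by omega
        obtain ⟨e, he⟩ := hde
        rw [he, show n * (2 * e) = (2 * n) * e from by ring]
        exact Dvd.dvd.mul_right h2n e
      have hNeven : 2 ∣ N := by
        by_contra hNodd
        apply hA
        have hcop : Nat.Coprime N 2 :=
          Nat.coprime_comm.mp ((Nat.prime_two.coprime_iff_not_dvd).mpr hNodd)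
        have hNn : N ∣ n := hcop.dvd_of_dvd_mul_left h2n
        exact hNn.mul_right _
      obtain ⟨T, hang, hinv⟩ := doubleFan hd hl hN hdeven hNeven
      refine ⟨T, hang, ?_⟩
      have hcast : ((n * (d - 1) : ℕ) : ZMod N) = ((N / 2 : ℕ) : ZMod N) := by
        obtain ⟨k2, hk2⟩ := h2n
        obtain ⟨w, hw⟩ : ∃ w, k2 = 2 * w + 1 := by
          rcases Nat.even_or_odd k2 with ⟨w, hww⟩ | ⟨w, hww⟩
          · exfalso
            apply hA
            rw [hww] at hk2
            have e9 : N * (w + w) = 2 * (N * w) := by ring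
            have hNn : N ∣ n := ⟨w, by omega⟩
            exact hNn.mul_right _
          · exact ⟨w, by omega⟩
        have hne : n = N * w + N / 2 := by
          rw [hw] at hk2
          have e9 : N * (2 * w + 1) = 2 * (N * w) + N := by ring
          have e11 : 2 * n = 2 * (N * w) + N := hk2.trans e9
          omega
        obtain ⟨e, he⟩ := hdeven
        have he1 : 1 ≤ e := by omega
        have hmod1 : n % N = (N / 2) % N := by rw [hne, Nat.mul_add_mod]
        have hmod2 : (n * (d - 1)) % N = ((N / 2) * (d - 1)) % N :=
          Nat.ModEq.mul_right (d - 1) hmod1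
        have hstep : (N / 2) * (d - 1) = N * (e - 1) + N / 2 := by
          have h2h : N / 2 * 2 = N := by omega
          have hd1 : d - 1 = 2 * (e - 1) + 1 := by omega
          calc (N / 2) * (d - 1) = (N / 2) * (2 * (e - 1) + 1) := by rw [← hd1]
            _ = (N / 2 * 2) * (e - 1) + N / 2 := by ring
            _ = N * (e - 1) + N / 2 := by rw [h2h]
        have hmod3 : ((N / 2) * (d - 1)) % N = (N / 2) % N := by
          rw [hstep, Nat.mul_add_mod]
        exact (ZMod.natCast_eq_natCast_iff _ _ _).mpr (hmod2.trans hmod3)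
      rw [rot_cast_eq hcast]
      exact hinv
    · -- gcd construction
      set t := Nat.gcd (d + 1) (2 * (ℓ - 1)) with ht
      have htpos : 0 < t := Nat.gcd_pos_of_pos_left _ (by omega)
      set s := Nat.gcd N t with hs
      have hspos : 0 < s := Nat.gcd_pos_of_pos_left _ (by omega)
      have hsN : s ∣ N := Nat.gcd_dvd_left _ _
      have hst : s ∣ t := Nat.gcd_dvd_right _ _
      have htd : t ∣ d + 1 := Nat.gcd_dvd_left _ _
      have htl : t ∣ 2 * (ℓ - 1) := Nat.gcd_dvd_right _ _
      have hNsn : (N / s) ∣ n := by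
        have hcop : Nat.Coprime (N / s) (t / s) := Nat.coprime_div_gcd_div_gcd hspos
        have hts : (t / s) * s = t := Nat.div_mul_cancel hst
        have hNs : (N / s) * s = N := Nat.div_mul_cancel hsN
        have h1 : (N / s) * s ∣ (n * (t / s)) * s := by
          rw [show (n * (t / s)) * s = n * ((t / s) * s) from by ring, hts, hNs]
          rw [show n * t = t * n from by ring]
          exact htn
        have h2 : (N / s) ∣ n * (t / s) := (Nat.mul_dvd_mul_iff_right hspos).mp h1
        exact hcop.dvd_of_dvd_mul_right h2
      by_cases hseven : 2 ∣ s
      · set r₀ := s / 2 with hr₀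
        have hr2 : 2 * r₀ = s := Nat.mul_div_cancel' hseven
        have hr₀pos : 0 < r₀ := by omega
        have hr₀s : r₀ ∣ s := ⟨2, by omega⟩
        have hr₀d : r₀ ∣ d + 1 := hr₀s.trans (hst.trans htd)
        have hr₀N : r₀ ∣ N := hr₀s.trans hsN
        have hr₀l : r₀ ∣ ℓ - 1 := by
          have h1 : 2 * r₀ ∣ 2 * (ℓ - 1) := by rw [hr2]; exact hst.trans htl
          exact (mul_dvd_mul_iff_left two_ne_zero).mp h1
        have hdodd : 2 ∣ d - 1 := by
          have h2d1 : 2 ∣ d + 1 := hseven.trans (hst.trans htd)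
          omega
        obtain ⟨e, he⟩ := hdodd
        have hNr₀ : (N / r₀) ∣ n * (d - 1) := by
          have hNs2 : s * (N / s) = N := Nat.mul_div_cancel' hsN
          set u := N / s with hu
          have hkey2 : N = (2 * u) * r₀ := by
            rw [← hNs2, ← hr2]
            ring
          have hdiv : N / r₀ = 2 * u := Nat.div_eq_of_eq_mul_left hr₀pos hkey2
          rw [hdiv, he, show n * (2 * e) = 2 * (n * e) from by ring]
          exact mul_dvd_mul_left 2 (hNsn.mul_right e)
        obtain ⟨T, hang, hinv⟩ := multiFan hd hl hN hr₀pos hr₀N hr₀d hr₀l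
        exact ⟨T, hang, hinv _ hNr₀⟩
      · have hcop : Nat.Coprime s 2 :=
          Nat.coprime_comm.mp ((Nat.prime_two.coprime_iff_not_dvd).mpr hseven)
        have hsl : s ∣ ℓ - 1 := hcop.dvd_of_dvd_mul_left (hst.trans htl)
        obtain ⟨T, hang, hinv⟩ := multiFan hd hl hN hspos hsN (hst.trans htd) hsl
        exact ⟨T, hang, hinv _ (hNsn.mul_right _)⟩
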